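/- arXiv:2304.06629 — 5 statements merged into one kernel-verified Lean document; each statement's English description precedes it below -/
import Mathlib

section
/- For every integer partition λ, the number of colored permutations of shape λ equals the principal lower hook product of λ at α = 1, i.e. |S_λ| = Π_{j=1}^{λ₁} ((λ₁ − j) + λ′_j). -/
open Finset

/-- The conjugate partition: `conjP L j = λ′_j = #{i : λ_i ≥ j}`. -/
def conjP (L : List ℕ) (j : ℕ) : ℕ := (L.filter (fun p => decide (j ≤ p))).length

/-- `L` is the list of parts of an integer partition (weakly decreasing, positive parts). -/
def IsPartition (L : List ℕ) : Prop := L.Pairwise (· ≥ ·) ∧ ∀ p ∈ L, 0 < p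

/-- Colored permutations of shape `L`: a coloring `c` of the symbols `1,…,λ₁` (represented by
`Fin λ₁`, symbol `i` being `i.1 + 1`) with `1 ≤ c i ≤ λ′_i`, together with a permutation whose
cycles are monochromatic. -/
def ColoredPerms (L : List ℕ) :
    Set ((Fin L.headI → ℕ) × Equiv.Perm (Fin L.headI)) :=
  {x | (∀ i, 1 ≤ x.1 i ∧ x.1 i ≤ conjP L (i.1 + 1)) ∧ ∀ i, x.1 (x.2 i) = x.1 i}

/-- Colored derangements of shape `L`: colored permutations such that `σ i = i → c i ≠ 1`. -/
def ColoredDerangements (L : List ℕ) :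
    Set ((Fin L.headI → ℕ) × Equiv.Perm (Fin L.headI)) :=
  {x | x ∈ ColoredPerms L ∧ ∀ i, x.2 i = i → x.1 i ≠ 1}

/-- Number of cycles of a permutation in its disjoint cycle decomposition,
fixed points counting as cycles. -/
noncomputable def cycleCount {m : ℕ} (σ : Equiv.Perm (Fin m)) : ℕ :=
  σ.cycleType.card + (Finset.univ.filter fun i => σ i = i).card

/-- `dCount L k` : the number `d^λ_k` of colored derangements of shape `L`
whose permutation has exactly `k` cycles. -/
noncomputable def dCount (L : List ℕ) (k : ℕ) : ℕ :=
  Set.ncard {x | x ∈ ColoredDerangements L ∧ cycleCount x.2 = k}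

/-- The λ-Jack derangement number `D^λ_α = Σ_{k=1}^{λ₁} d^λ_k α^{λ₁−k}`. -/
noncomputable def JackD (L : List ℕ) (α : ℝ) : ℝ :=
  ∑ k ∈ Finset.Icc 1 L.headI, (dCount L k : ℝ) * α ^ (L.headI - k)

/-- Block (0-based) of a point of `{1,…,2m}` (points represented by `Fin (2m)`,
point `p` being `p.1 + 1`; the block of `p` is `k` iff `p ∈ {2k−1, 2k}` 1-based). -/
def blk {m : ℕ} (p : Fin (2 * m)) : Fin m := ⟨p.1 / 2, by have := p.2; omega⟩

/-- Colored perfect matchings of shape `L`: a perfect matching of `{1,…,2λ₁}` (a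
fixed-point-free involution) together with a coloring `c` of the blocks `{2k−1,2k}` with
`1 ≤ c_k ≤ λ′_k`, such that matched points lie in blocks of the same color. -/
def ColoredMatchings (L : List ℕ) :
    Set ((Fin L.headI → ℕ) × Equiv.Perm (Fin (2 * L.headI))) :=
  {x | Function.Involutive x.2 ∧ (∀ p, x.2 p ≠ p) ∧
        (∀ k, 1 ≤ x.1 k ∧ x.1 k ≤ conjP L (k.1 + 1)) ∧
        (∀ p, x.1 (blk (x.2 p)) = x.1 (blk p))}

/-- Colored perfect matching derangements of shape `L`: colored perfect matchings such that
whenever a block `{2k−1,2k}` is itself a pair of the matching, its color is not `1`. -/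
def ColoredMatchDerangements (L : List ℕ) :
    Set ((Fin L.headI → ℕ) × Equiv.Perm (Fin (2 * L.headI))) :=
  {x | x ∈ ColoredMatchings L ∧ ∀ p, blk (x.2 p) = blk p → x.1 (blk p) ≠ 1}

/-- The principal lower hook length `h_j = α(λ₁ − j) + λ′_j` of the cell `(1,j)`. -/
noncomputable def hlow (L : List ℕ) (α : ℝ) (j : ℕ) : ℝ :=
  α * ((L.headI : ℝ) - (j : ℝ)) + (conjP L j : ℝ)

/-- `fixPtCount m k` : the number `d_{m,k}` of permutations of `{1,…,m}` with exactly
`k` fixed points. -/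
noncomputable def fixPtCount (m k : ℕ) : ℕ :=
  Set.ncard {σ : Equiv.Perm (Fin m) | (Finset.univ.filter fun i => σ i = i).card = k}

/-- `Ematch m` : the number of perfect matchings of `{1,…,2m}` containing none of the base
pairs `{2t−1, 2t}`. -/
noncomputable def Ematch (m : ℕ) : ℕ :=
  Set.ncard {σ : Equiv.Perm (Fin (2 * m)) |
    Function.Involutive σ ∧ (∀ p, σ p ≠ p) ∧ ∀ p, (σ p).1 / 2 ≠ p.1 / 2}


def CPb (m : ℕ) (b : ℕ → ℕ) : Set ((Fin m → ℕ) × Equiv.Perm (Fin m)) :=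
  {x | (∀ i, 1 ≤ x.1 i ∧ x.1 i ≤ b (i.1 + 1)) ∧ ∀ i, x.1 (x.2 i) = x.1 i}

lemma decomposeFin_fst {n : ℕ} (σ : Equiv.Perm (Fin (n+1))) :
    (Equiv.Perm.decomposeFin σ).1 = σ 0 := by
  conv_rhs => rw [← Equiv.Perm.decomposeFin.symm_apply_apply σ]
  rw [show Equiv.Perm.decomposeFin σ = ((Equiv.Perm.decomposeFin σ).1, (Equiv.Perm.decomposeFin σ).2) from rfl]
  rw [Equiv.Perm.decomposeFin_symm_apply_zero]

lemma sigma_succ {n : ℕ} (σ : Equiv.Perm (Fin (n+1))) (x : Fin n) :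
    σ x.succ = Equiv.swap 0 (σ 0) ((Equiv.Perm.decomposeFin σ).2 x).succ := by
  conv_lhs => rw [← Equiv.Perm.decomposeFin.symm_apply_apply σ]
  rw [show Equiv.Perm.decomposeFin σ = ((Equiv.Perm.decomposeFin σ).1, (Equiv.Perm.decomposeFin σ).2) from rfl,
    Equiv.Perm.decomposeFin_symm_apply_succ, decomposeFin_fst]

def tagColor {n : ℕ} (b1 : ℕ) (c' : Fin n → ℕ) : Fin b1 ⊕ Fin n → ℕ :=
  Sum.elim (fun k => k.1 + 1) c'

def tagPt {n : ℕ} (b1 : ℕ) : Fin b1 ⊕ Fin n → Fin (n+1) :=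
  Sum.elim (fun _ => 0) Fin.succ

lemma mem_fwd {n : ℕ} {b : ℕ → ℕ} {c : Fin (n+1) → ℕ} {σ : Equiv.Perm (Fin (n+1))}
    (h : (c, σ) ∈ CPb (n+1) b) :
    (c ∘ Fin.succ, (Equiv.Perm.decomposeFin σ).2) ∈ CPb n (fun j => b (j+1)) := by
  obtain ⟨hbd, hmono⟩ := h
  refine ⟨fun i => ?_, fun i => ?_⟩
  · simpa using hbd i.succ
  · simp only [Function.comp_apply]
    have hs := sigma_succ σ i
    by_cases hp : ((Equiv.Perm.decomposeFin σ).2 i).succ = σ 0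
    · rw [hp, Equiv.swap_apply_right] at hs
      have h1 : c (σ 0) = c 0 := hmono 0
      have h2 : c (σ i.succ) = c i.succ := hmono i.succ
      rw [hs] at h2
      rw [hp, h1, h2]
    · rw [Equiv.swap_apply_of_ne_of_ne (Fin.succ_ne_zero _) hp] at hs
      have h2 : c (σ i.succ) = c i.succ := hmono i.succ
      rw [hs] at h2
      exact h2

lemma mem_bwd {n : ℕ} {b : ℕ → ℕ} (hb : ∀ i j, i ≤ j → b j ≤ b i)
    (t : Fin (b 1) ⊕ Fin n) {c' : Fin n → ℕ} {e : Equiv.Perm (Fin n)}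
    (h : (c', e) ∈ CPb n (fun j => b (j+1))) :
    (Fin.cons (tagColor (b 1) c' t) c',
      Equiv.Perm.decomposeFin.symm (tagPt (b 1) t, e)) ∈ CPb (n+1) b := by
  obtain ⟨hbd', hmono'⟩ := h
  refine ⟨fun i => ?_, fun i => ?_⟩
  · refine Fin.cases ?_ (fun j => ?_) i
    · simp only [Fin.cons_zero, Fin.val_zero, zero_add]
      cases t with
      | inl k => exact ⟨Nat.le_add_left _ _, k.2⟩
      | inr q =>
        simp only [tagColor, Sum.elim_inr]
        exact ⟨(hbd' q).1, le_trans (hbd' q).2 (hb 1 (q.1+1+1) (by omega))⟩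
    · simpa using hbd' j
  · show (Fin.cons (tagColor (b 1) c' t) c' : Fin (n+1) → ℕ)
        (Equiv.Perm.decomposeFin.symm (tagPt (b 1) t, e) i)
      = (Fin.cons (tagColor (b 1) c' t) c' : Fin (n+1) → ℕ) i
    refine Fin.cases ?_ (fun j => ?_) i
    · rw [Equiv.Perm.decomposeFin_symm_apply_zero]
      cases t with
      | inl k => rfl
      | inr q =>
        simp only [tagPt, Sum.elim_inr, Fin.cons_succ, Fin.cons_zero, tagColor, Sum.elim_inr]
    · rw [Equiv.Perm.decomposeFin_symm_apply_succ]
      by_cases hp : (e j).succ = tagPt (b 1) t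
      · rw [hp, Equiv.swap_apply_right, Fin.cons_zero, Fin.cons_succ]
        cases t with
        | inl k => exact absurd hp (Fin.succ_ne_zero _)
        | inr q =>
          have hq : e j = q := Fin.succ_injective _ hp
          simp only [tagColor, Sum.elim_inr]
          have hm : c' (e j) = c' j := hmono' j
          rw [← hm, hq]
      · rw [Equiv.swap_apply_of_ne_of_ne (Fin.succ_ne_zero _) hp, Fin.cons_succ,
          Fin.cons_succ]
        exact hmono' j

noncomputable def cpEquiv (n : ℕ) (b : ℕ → ℕ) (hb : ∀ i j, i ≤ j → b j ≤ b i) :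
    CPb (n+1) b ≃ (Fin (b 1) ⊕ Fin n) × CPb n (fun j => b (j+1)) where
  toFun x :=
    ⟨if h0 : x.1.2 0 = 0 then Sum.inl ⟨x.1.1 0 - 1, by
        have h1 := x.2.1 0
        simp only [Fin.val_zero, zero_add] at h1
        omega⟩
      else Sum.inr ((x.1.2 0).pred h0),
     ⟨(x.1.1 ∘ Fin.succ, (Equiv.Perm.decomposeFin x.1.2).2), mem_fwd x.2⟩⟩
  invFun y :=
    ⟨(Fin.cons (tagColor (b 1) y.2.1.1 y.1) y.2.1.1,
      Equiv.Perm.decomposeFin.symm (tagPt (b 1) y.1, y.2.1.2)), mem_bwd hb y.1 y.2.2⟩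
  left_inv x := by
    obtain ⟨⟨c, σ⟩, hbd, hmono⟩ := x
    apply Subtype.ext
    dsimp only
    apply Prod.ext
    · funext i
      refine Fin.cases ?_ (fun j => ?_) i
      · simp only [Fin.cons_zero, tagColor]
        by_cases h0 : σ 0 = 0
        · rw [dif_pos h0]
          simp only [Sum.elim_inl]
          have h1 : 1 ≤ c 0 := (hbd 0).1
          show c 0 - 1 + 1 = c 0
          omega
        · rw [dif_neg h0]
          simp only [Sum.elim_inr, Function.comp_apply, Fin.succ_pred]
          exact hmono 0
      · simp [Fin.cons_succ]
    · show Equiv.Perm.decomposeFin.symm (_, _) = σ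
      have hpt : tagPt (b 1) (if h0 : σ 0 = 0 then Sum.inl (α := Fin (b 1))
          ⟨c 0 - 1, by have := hbd 0; simp only [Fin.val_zero, zero_add] at this; omega⟩
          else Sum.inr ((σ 0).pred h0)) = σ 0 := by
        by_cases h0 : σ 0 = 0
        · rw [dif_pos h0]; simp [tagPt, h0]
        · rw [dif_neg h0]; simp [tagPt]
      rw [hpt, ← decomposeFin_fst]
      exact Equiv.Perm.decomposeFin.symm_apply_apply σ
  right_inv y := by
    obtain ⟨t, ⟨⟨c', e⟩, hy⟩⟩ := y
    have h0 : (Equiv.Perm.decomposeFin.symm (tagPt (b 1) t, e)) 0 = tagPt (b 1) t :=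
      Equiv.Perm.decomposeFin_symm_apply_zero _ _
    have he : (Equiv.Perm.decomposeFin (Equiv.Perm.decomposeFin.symm (tagPt (b 1) t, e))).2 = e := by
      rw [Equiv.apply_symm_apply]
    dsimp only
    apply Prod.ext
    · dsimp only
      cases t with
      | inl k =>
        have hz : (Equiv.Perm.decomposeFin.symm (tagPt (b 1) (Sum.inl (β := Fin n) k), e)) 0 = 0 := by
          rw [h0]; rfl
        rw [dif_pos hz]
        congr 1
      | inr q =>
        have hz : (Equiv.Perm.decomposeFin.symm (tagPt (b 1) (Sum.inr (α := Fin (b 1)) q), e)) 0 ≠ 0 := by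
          rw [h0]; exact Fin.succ_ne_zero q
        have h0' : (Equiv.Perm.decomposeFin.symm (tagPt (b 1) (Sum.inr (α := Fin (b 1)) q), e)) 0 = q.succ := h0
        rw [dif_neg hz]
        congr 1
    · apply Subtype.ext
      dsimp only
      apply Prod.ext
      · funext j
        simp [Fin.cons_succ]
      · exact he

lemma icc_prod (f : ℕ → ℕ) (m : ℕ) :
    ∏ j ∈ Icc 1 m, f j = ∏ i ∈ range m, f (1 + i) := by
  rw [← Finset.Ico_add_one_right_eq_Icc, Finset.prod_Ico_eq_prod_range]
  simp

lemma cpb_card (m : ℕ) : ∀ b : ℕ → ℕ, (∀ i j, i ≤ j → b j ≤ b i) →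
    Nat.card (CPb m b) = ∏ j ∈ Icc 1 m, (b j + (m - j)) := by
  induction m with
  | zero =>
    intro b hb
    have huniv : CPb 0 b = Set.univ := by
      ext x
      simp only [CPb, Set.mem_setOf_eq, Set.mem_univ, iff_true]
      exact ⟨fun i => i.elim0, fun i => i.elim0⟩
    rw [huniv]
    rw [show (Icc 1 0 : Finset ℕ) = ∅ from rfl, Finset.prod_empty]
    rw [Nat.card_eq_one_iff_unique]
    constructor
    · constructor
      intro a b
      apply Subtype.ext
      apply Prod.ext
      · funext i; exact i.elim0
      · apply Equiv.ext; intro i; exact i.elim0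
    · exact ⟨⟨(fun i => i.elim0, 1), trivial⟩⟩
  | succ n ih =>
    intro b hb
    rw [Nat.card_congr (cpEquiv n b hb), Nat.card_prod, Nat.card_sum,
      Nat.card_eq_fintype_card, Nat.card_eq_fintype_card, Fintype.card_fin, Fintype.card_fin,
      ih _ (fun i j hij => hb _ _ (by omega))]
    rw [icc_prod, icc_prod, Finset.prod_range_succ']
    have h0 : b (1 + 0) + (n + 1 - (1 + 0)) = b 1 + n := by
      congr 1 <;> omega
    rw [h0]
    rw [mul_comm]
    congr 1
    apply Finset.prod_congr rfl
    intro i _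
    have h1 : 1 + (i + 1) = 1 + i + 1 := by omega
    rw [h1]
    congr 1
    omega

lemma conjP_anti (L : List ℕ) : ∀ i j, i ≤ j → conjP L j ≤ conjP L i := by
  intro i j hij
  exact List.Sublist.length_le
    (List.monotone_filter_right L (fun a ha => by
      simp only [decide_eq_true_eq] at ha ⊢; omega))

/-- `|S_λ| = Π_{j=1}^{λ₁} ((λ₁ − j) + λ′_j)`. -/
theorem coloredPerms_card (L : List ℕ) (hL : IsPartition L) :
    (ColoredPerms L).ncard =
      ∏ j ∈ Finset.Icc 1 L.headI, ((L.headI - j) + conjP L j) := by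
  have h : ColoredPerms L = CPb L.headI (conjP L) := rfl
  rw [h, ← Nat.card_coe_set_eq, cpb_card L.headI (conjP L) (conjP_anti L)]
  exact Finset.prod_congr rfl (fun j _ => Nat.add_comm _ _)
end

section
/- For every integer partition λ, the number of colored perfect matching derangements of shape λ equals the λ-Jack derangement number at α = 2: |D′_λ| = Σ_{k=1}^{λ₁} d^λ_k · 2^{λ₁−k}. -/
open Finset

set_option linter.unnecessarySeqFocus false
set_option maxHeartbeats 1000000

namespace JD

variable {m : ℕ}


variable {m : ℕ}

def pt (k : Fin m) (b : Bool) : Fin (2 * m) :=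
  ⟨2 * k.1 + b.toNat, by have hk := k.2; cases b <;> simp <;> omega⟩

@[simp] lemma blk_pt (k : Fin m) (b : Bool) : blk (pt k b) = k := by
  apply Fin.ext; simp [blk, pt]; cases b <;> simp <;> omega

lemma pt_injEq {k l : Fin m} {a b : Bool} (h : pt k a = pt l b) : k = l ∧ a = b := by
  have h1 := congrArg (fun p : Fin (2 * m) => p.1) h
  simp only [pt] at h1
  cases a <;> cases b <;> simp at h1 <;>
    first
      | exact ⟨Fin.ext (by omega), rfl⟩
      | (exfalso; omega)

def pbit (p : Fin (2 * m)) : Bool := decide (p.1 % 2 = 1)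

@[simp] lemma pbit_pt (k : Fin m) (b : Bool) : pbit (pt k b) = b := by
  cases b <;> simp [pbit, pt] <;> omega

@[simp] lemma pt_pbit (p : Fin (2 * m)) : pt (blk p) (pbit p) = p := by
  apply Fin.ext
  simp only [pt, blk, pbit]
  rcases Nat.mod_two_eq_zero_or_one p.1 with h | h <;> simp [h] <;> omega

def flp (p : Fin (2 * m)) : Fin (2 * m) := pt (blk p) (!pbit p)

@[simp] lemma flp_pt (k : Fin m) (b : Bool) : flp (pt k b) = pt k (!b) := by
  simp [flp]

lemma flp_invol : Function.Involutive (flp (m := m)) := by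
  intro p
  conv_lhs => rw [← pt_pbit p]
  rw [flp_pt, flp_pt, Bool.not_not, pt_pbit]

lemma flp_ne (p : Fin (2 * m)) : flp p ≠ p := by
  intro h
  rw [← pt_pbit p, flp_pt] at h
  have := (pt_injEq h).2
  simp at this

@[simp] lemma blk_flp (p : Fin (2 * m)) : blk (flp p) = blk p := by
  rw [← pt_pbit p, flp_pt, blk_pt, blk_pt]

/-! ### the forward map -/

def outp (f : Fin m → Bool) (k : Fin m) : Fin (2 * m) := pt k (f k)
def innp (f : Fin m → Bool) (k : Fin m) : Fin (2 * m) := pt k (!f k)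

@[simp] lemma blk_outp (f : Fin m → Bool) (k) : blk (outp f k) = k := blk_pt _ _
@[simp] lemma blk_innp (f : Fin m → Bool) (k) : blk (innp f k) = k := blk_pt _ _

lemma innp_ne_outp (f : Fin m → Bool) (k) : innp f k ≠ outp f k := by
  intro h
  have := (pt_injEq h).2
  simp at this

lemma flp_innp (f : Fin m → Bool) (k) : flp (innp f k) = outp f k := by
  simp [innp, outp]

lemma flp_outp (f : Fin m → Bool) (k) : flp (outp f k) = innp f k := by
  simp [innp, outp]

lemma eq_outp_or_innp (f : Fin m → Bool) (p : Fin (2 * m)) :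
    p = outp f (blk p) ∨ p = innp f (blk p) := by
  by_cases h : pbit p = f (blk p)
  · left; rw [outp, ← h, pt_pbit]
  · right
    rw [innp, show (!f (blk p)) = pbit p from by
      cases hb : pbit p <;> cases hf : f (blk p) <;> simp_all, pt_pbit]

def Mf (σ : Equiv.Perm (Fin m)) (f : Fin m → Bool) (p : Fin (2 * m)) : Fin (2 * m) :=
  if p = outp f (blk p) then innp f (σ (blk p)) else outp f (σ⁻¹ (blk p))

lemma Mf_outp (σ : Equiv.Perm (Fin m)) (f : Fin m → Bool) (k) :
    Mf σ f (outp f k) = innp f (σ k) := by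
  rw [Mf, blk_outp, if_pos rfl]

lemma Mf_innp (σ : Equiv.Perm (Fin m)) (f : Fin m → Bool) (k) :
    Mf σ f (innp f k) = outp f (σ⁻¹ k) := by
  rw [Mf, blk_innp, if_neg (innp_ne_outp f k)]

lemma Mf_invol (σ : Equiv.Perm (Fin m)) (f : Fin m → Bool) :
    Function.Involutive (Mf σ f) := by
  intro p
  rcases eq_outp_or_innp f p with h | h <;> rw [h]
  · rw [Mf_outp, Mf_innp, ← Equiv.Perm.mul_apply, inv_mul_cancel, Equiv.Perm.one_apply]
  · rw [Mf_innp, Mf_outp, ← Equiv.Perm.mul_apply, mul_inv_cancel, Equiv.Perm.one_apply]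

lemma Mf_ne (σ : Equiv.Perm (Fin m)) (f : Fin m → Bool) (p) : Mf σ f p ≠ p := by
  rcases eq_outp_or_innp f p with h | h <;> rw [h]
  · rw [Mf_outp]
    intro he
    obtain ⟨hk, hb⟩ := pt_injEq he
    rw [hk] at hb; simp at hb
  · rw [Mf_innp]
    intro he
    obtain ⟨hk, hb⟩ := pt_injEq he
    rw [hk] at hb; simp at hb

def MP (σ : Equiv.Perm (Fin m)) (f : Fin m → Bool) : Equiv.Perm (Fin (2 * m)) :=
  Function.Involutive.toPerm _ (Mf_invol σ f)

lemma MP_apply (σ : Equiv.Perm (Fin m)) (f : Fin m → Bool) (p) : MP σ f p = Mf σ f p := rfl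




lemma zpow_add_one_apply {α : Type*} (σ : Equiv.Perm α) (i : ℤ) (x : α) :
    (σ ^ (i + 1)) x = σ ((σ ^ i) x) := by
  rw [show i + 1 = 1 + i from by omega, zpow_add, zpow_one, Equiv.Perm.mul_apply]

lemma zpow_sub_one_apply {α : Type*} (σ : Equiv.Perm α) (i : ℤ) (x : α) :
    (σ ^ (i - 1)) x = σ⁻¹ ((σ ^ i) x) := by
  rw [show i - 1 = -1 + i from by omega, zpow_add, zpow_neg_one, Equiv.Perm.mul_apply]

noncomputable def Mins (σ : Equiv.Perm (Fin m)) : Finset (Fin m) :=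
  @Finset.filter _ (fun k => ∀ j, σ.SameCycle k j → k ≤ j) (Classical.decPred _) Finset.univ

lemma mem_Mins {σ : Equiv.Perm (Fin m)} {k : Fin m} :
    k ∈ Mins σ ↔ ∀ j, σ.SameCycle k j → k ≤ j := by
  simp [Mins]

def Nrm (σ : Equiv.Perm (Fin m)) (f : Fin m → Bool) : Prop := ∀ k ∈ Mins σ, f k = false

theorem Mf_inj {σ σ' : Equiv.Perm (Fin m)} {f f' : Fin m → Bool}
    (n1 : Nrm σ f) (n2 : Nrm σ' f') (h : Mf σ f = Mf σ' f') : σ = σ' ∧ f = f' := by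
  classical
  have hA : ∀ k, f k = f' k → σ k = σ' k ∧ f (σ k) = f' (σ k) := by
    intro k hk
    have e := congrFun h (outp f k)
    rw [Mf_outp, show outp f k = outp f' k from by rw [outp, outp, hk], Mf_outp] at e
    obtain ⟨h1, h2⟩ := pt_injEq e
    refine ⟨h1, ?_⟩
    rw [← h1] at h2
    simpa using h2
  have hB : ∀ k, f k ≠ f' k → σ k = σ'⁻¹ k ∧ f (σ k) ≠ f' (σ k) := by
    intro k hk
    have hkk : f k = !f' k := by cases h1 : f k <;> cases h2 : f' k <;> simp_all
    have e := congrFun h (outp f k)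
    rw [Mf_outp, show outp f k = innp f' k from by rw [outp, innp, hkk], Mf_innp] at e
    obtain ⟨h1, h2⟩ := pt_injEq e
    refine ⟨h1, ?_⟩
    rw [← h1] at h2
    intro hc
    rw [hc] at h2
    simp at h2
  have hB' : ∀ k, f k ≠ f' k → σ⁻¹ k = σ' k ∧ f (σ⁻¹ k) ≠ f' (σ⁻¹ k) := by
    intro k hk
    have hkk : (!f k) = f' k := by cases h1 : f k <;> cases h2 : f' k <;> simp_all
    have e := congrFun h (innp f k)
    rw [Mf_innp, show innp f k = outp f' k from by rw [outp, innp, hkk], Mf_outp] at e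
    obtain ⟨h1, h2⟩ := pt_injEq e
    refine ⟨h1, ?_⟩
    rw [← h1] at h2
    intro hc
    rw [hc] at h2
    simp at h2
  have hD : ∀ k, f k ≠ f' k → ∀ i : ℤ, f ((σ ^ i) k) ≠ f' ((σ ^ i) k) := by
    intro k hk i
    induction i using Int.induction_on with
    | zero => simpa using hk
    | succ i ih => rw [zpow_add_one_apply]; exact (hB _ ih).2
    | pred i ih => rw [show (-i : ℤ) - 1 = -i - 1 from rfl, zpow_sub_one_apply]; exact (hB' _ ih).2
  have hf : f = f' := by
    by_contra hne
    obtain ⟨k, hk⟩ := Function.ne_iff.1 hne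
    set S : Finset (Fin m) :=
      @Finset.filter _ (σ.SameCycle k) (Classical.decPred _) Finset.univ with hS
    have hmemS : ∀ j, j ∈ S ↔ σ.SameCycle k j := by intro j; simp [hS]
    have hkS : k ∈ S := (hmemS k).2 (Equiv.Perm.SameCycle.refl σ k)
    have hSne : S.Nonempty := ⟨k, hkS⟩
    set t := S.min' hSne with ht
    have htS : σ.SameCycle k t := (hmemS t).1 (S.min'_mem hSne)
    have hDt : f t ≠ f' t := by
      obtain ⟨i, hi⟩ := htS
      rw [← hi]; exact hD k hk i
    have htMins : t ∈ Mins σ := by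
      rw [mem_Mins]
      intro j hj
      exact S.min'_le j ((hmemS j).2 (htS.trans hj))
    have horb : ∀ i : ℤ, σ.SameCycle k ((σ' ^ i) t) := by
      intro i
      induction i using Int.induction_on with
      | zero => simpa using htS
      | succ i ih =>
        rw [zpow_add_one_apply]
        set x := (σ' ^ (i:ℤ)) t
        have hDx : f x ≠ f' x := by obtain ⟨j, hj⟩ := ih; rw [← hj]; exact hD k hk j
        have hsx : σ' x = σ⁻¹ x := (hB' x hDx).1.symm
        rw [hsx]
        obtain ⟨j, hj⟩ := ih
        exact ⟨j - 1, by rw [zpow_sub_one_apply, hj]⟩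
      | pred i ih =>
        rw [show (-i : ℤ) - 1 = -i - 1 from rfl, zpow_sub_one_apply]
        set x := (σ' ^ (-i : ℤ)) t
        have hDx : f x ≠ f' x := by obtain ⟨j, hj⟩ := ih; rw [← hj]; exact hD k hk j
        have hsx : σ'⁻¹ x = σ x := (hB x hDx).1.symm
        rw [hsx]
        obtain ⟨j, hj⟩ := ih
        exact ⟨j + 1, by rw [zpow_add_one_apply, hj]⟩
    have htMins' : t ∈ Mins σ' := by
      rw [mem_Mins]
      rintro j ⟨i, hi⟩
      exact S.min'_le j ((hmemS j).2 (hi ▸ horb i))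
    have := n1 t htMins
    have := n2 t htMins'
    exact hDt (by simp_all)
  subst hf
  exact ⟨Equiv.ext fun k => (hA k rfl).1, rfl⟩




theorem exists_pre (M : Equiv.Perm (Fin (2 * m))) (hInv : Function.Involutive ⇑M)
    (hne : ∀ p, M p ≠ p) :
    ∃ (σ : Equiv.Perm (Fin m)) (f : Fin m → Bool), Nrm σ f ∧ Mf σ f = ⇑M := by
  classical
  set F : Equiv.Perm (Fin (2 * m)) := Function.Involutive.toPerm _ (flp_invol (m := m)) with hF
  have hFapp : ∀ p, F p = flp p := fun _ => rfl
  set T : Equiv.Perm (Fin (2 * m)) := M * F with hT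
  have hTapp : ∀ p, T p = M (flp p) := fun _ => rfl
  have hMM : M * M = 1 := Equiv.ext fun p => hInv p
  have hM2 : M⁻¹ = M := inv_eq_of_mul_eq_one_right hMM
  have hFF : F * F = 1 := Equiv.ext fun p => flp_invol p
  have hF2 : F⁻¹ = F := inv_eq_of_mul_eq_one_right hFF
  have hTinv : T⁻¹ = F * M := by rw [hT, mul_inv_rev, hM2, hF2]
  have hTinvapp : ∀ p, T⁻¹ p = flp (M p) := by
    intro p; rw [hTinv]; rfl
  have hconj : F * T * F = T⁻¹ := by
    rw [hT, hTinv, mul_assoc, mul_assoc, hFF, mul_one]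
  have hconjz : ∀ i : ℤ, F * T ^ i * F = T ^ (-i) := by
    intro i
    have h1 : (MulAut.conj F) (T ^ i) = ((MulAut.conj F) T) ^ i := map_zpow _ _ _
    have h2 : (MulAut.conj F) T = T⁻¹ := by
      simp only [MulAut.conj_apply, hF2]
      exact hconj
    have h3 : (MulAut.conj F) (T ^ i) = T ^ (-i) := by rw [h1, h2, inv_zpow, zpow_neg]
    calc F * T ^ i * F = (MulAut.conj F) (T ^ i) := by simp only [MulAut.conj_apply, hF2]
    _ = T ^ (-i) := h3
  have flp_T_zpow : ∀ (i : ℤ) (p : Fin (2 * m)), flp ((T ^ i) p) = (T ^ (-i)) (flp p) := by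
    intro i p
    have := congrFun (congrArg (fun (e : Equiv.Perm (Fin (2 * m))) => ⇑e) (hconjz i)) (flp p)
    simp only [Equiv.Perm.coe_mul, Function.comp_apply] at this
    rw [hFapp, hFapp, flp_invol p] at this
    rw [← this]
  have noflip : ∀ (i : ℤ) (p : Fin (2 * m)), (T ^ i) p ≠ flp p := by
    intro i p h
    have hj : ∀ j : ℤ, flp ((T ^ j) p) = (T ^ (i - j)) p := by
      intro j
      rw [flp_T_zpow, ← h, ← Equiv.Perm.mul_apply, ← zpow_add,
        show -j + i = i - j from by omega]
    rcases Int.even_or_odd i with ⟨j, hji⟩ | ⟨j, hji⟩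
    · have := hj j
      rw [show i - j = j from by omega] at this
      exact flp_ne _ this
    · have hMq : ∀ q, M q = T (flp q) := by
        intro q
        rw [hTapp, flp_invol q]
      have := hMq ((T ^ (j + 1)) p)
      rw [hj (j + 1), show i - (j + 1) = j from by omega, ← zpow_add_one_apply] at this
      rw [show (j : ℤ) + 1 = j + 1 from rfl] at this
      exact hne _ this
  have noflipSC : ∀ p, ¬ T.SameCycle p (flp p) := by
    rintro p ⟨i, hi⟩
    exact noflip i p hi
  have SC_flp : ∀ {p q}, T.SameCycle p q → T.SameCycle (flp p) (flp q) := by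
    rintro p q ⟨i, hi⟩
    exact ⟨-i, by rw [← flp_T_zpow, hi]⟩
  -- block relation
  set R : Fin m → Fin m → Prop :=
    fun k l => T.SameCycle (pt k false) (pt l false) ∨ T.SameCycle (pt k false) (pt l true)
    with hR
  have hRrefl : ∀ k, R k k := fun k => Or.inl (Equiv.Perm.SameCycle.refl T _)
  have hptSC : ∀ {k l : Fin m} {a b : Bool}, T.SameCycle (pt k a) (pt l b) → R k l := by
    intro k l a b hsc
    cases a
    · cases b
      · exact Or.inl hsc
      · exact Or.inr hsc
    · have h2 := SC_flp hsc
      rw [flp_pt, flp_pt] at h2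
      cases b
      · exact Or.inr (by simpa using h2)
      · exact Or.inl (by simpa using h2)
  have hRsymm : ∀ {k l}, R k l → R l k := by
    intro k l h
    rcases h with h | h
    · exact hptSC h.symm
    · exact hptSC h.symm
  have hRtrans : ∀ {k l n}, R k l → R l n → R k n := by
    intro k l n h1 h2
    rcases h1 with h1 | h1
    · rcases h2 with h2 | h2
      · exact hptSC (h1.trans h2)
      · exact hptSC (h1.trans h2)
    · rcases h2 with h2 | h2
      · have h2' := SC_flp h2
        rw [flp_pt, flp_pt] at h2'
        exact hptSC (h1.trans (by simpa using h2'))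
      · have h2' := SC_flp h2
        rw [flp_pt, flp_pt] at h2'
        exact hptSC (h1.trans (by simpa using h2'))
  set bc : Fin m → Finset (Fin m) := fun k => Finset.filter (R k) Finset.univ with hbc
  have hmembc : ∀ k l, l ∈ bc k ↔ R k l := by intro k l; simp [hbc]
  have hbcne : ∀ k, (bc k).Nonempty := fun k => ⟨k, (hmembc k k).2 (hRrefl k)⟩
  set t : Fin m → Fin m := fun k => (bc k).min' (hbcne k) with htdef
  have hbc_eq : ∀ {k l}, R k l → bc k = bc l := by
    intro k l h
    ext n
    rw [hmembc, hmembc]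
    exact ⟨fun h2 => hRtrans (hRsymm h) h2, fun h2 => hRtrans h h2⟩
  have ht_eq : ∀ {k l}, R k l → t k = t l := by
    intro k l h
    simp only [htdef]
    congr 1
    exact hbc_eq h
  have htRk : ∀ k, R k (t k) := fun k => (hmembc k (t k)).1 ((bc k).min'_mem (hbcne k))
  have ht_le : ∀ k l, R k l → t k ≤ l := fun k l h => (bc k).min'_le l ((hmembc k l).2 h)
  set f : Fin m → Bool := fun k => decide (T.SameCycle (pt (t k) true) (pt k false)) with hf
  have hinn : ∀ k, T.SameCycle (pt (t k) true) (pt k (!f k)) := by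
    intro k
    by_cases h : T.SameCycle (pt (t k) true) (pt k false)
    · have : f k = true := by simp [hf, h]
      rw [this]
      simpa using h
    · have hfk : f k = false := by simp [hf, h]
      rw [hfk]
      rcases htRk k with h2 | h2
      · have h3 := SC_flp h2
        rw [flp_pt, flp_pt] at h3
        simpa using h3.symm
      · exact absurd h2.symm h
  have huniq : ∀ {k : Fin m} {q : Fin (2 * m)}, T.SameCycle (pt (t k) true) q →
      (t (blk q) = t k ∧ pt (blk q) (!f (blk q)) = q) := by
    intro k q hq
    have hq2 : T.SameCycle (pt (t k) true) (pt (blk q) (pbit q)) := by rwa [pt_pbit]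
    have hR1 : R (t k) (blk q) := hptSC hq2
    have htt : t (t k) = t k := (ht_eq (htRk k)).symm
    have h1 : t (blk q) = t k := by rw [← ht_eq hR1, htt]
    refine ⟨h1, ?_⟩
    have hq3 : T.SameCycle (pt (t (blk q)) true) (pt (blk q) (pbit q)) := by rwa [h1]
    cases hcase : pbit q
    · rw [hcase] at hq3
      have : f (blk q) = true := by simp [hf, hq3]
      rw [this]
      simp only [Bool.not_true]
      rw [← hcase, pt_pbit]
    · rw [hcase] at hq3
      have : f (blk q) = false := by
        by_contra hcon
        have hcon' : f (blk q) = true := by cases hx : f (blk q) <;> simp_all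
        have h4 : T.SameCycle (pt (t (blk q)) true) (pt (blk q) false) := by
          simpa [hf, hcon'] using hcon'
        have h5 : T.SameCycle (pt (blk q) false) (pt (blk q) true) := h4.symm.trans hq3
        have := noflipSC (pt (blk q) false)
        rw [flp_pt] at this
        exact this (by simpa using h5)
      rw [this]
      simp only [Bool.not_false]
      rw [← hcase, pt_pbit]
  set inn : Fin m → Fin (2 * m) := fun k => pt k (!f k) with hinndef
  have hinnSC : ∀ k, T.SameCycle (pt (t k) true) (inn k) := hinn
  set s : Fin m → Fin m := fun k => blk (T (inn k)) with hsdef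
  set s' : Fin m → Fin m := fun k => blk (T⁻¹ (inn k)) with hs'def
  have hs : ∀ k, inn (s k) = T (inn k) ∧ t (s k) = t k := by
    intro k
    have h1 : T.SameCycle (pt (t k) true) (T (inn k)) :=
      (hinnSC k).trans ⟨1, by rw [zpow_one]⟩
    obtain ⟨ha, hb⟩ := huniq h1
    exact ⟨hb, ha⟩
  have hs' : ∀ k, inn (s' k) = T⁻¹ (inn k) ∧ t (s' k) = t k := by
    intro k
    have h1 : T.SameCycle (pt (t k) true) (T⁻¹ (inn k)) :=
      (hinnSC k).trans ⟨-1, by rw [zpow_neg_one]⟩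
    obtain ⟨ha, hb⟩ := huniq h1
    exact ⟨hb, ha⟩
  have hss' : Function.LeftInverse s' s := by
    intro k
    show blk (T⁻¹ (inn (s k))) = k
    rw [(hs k).1, ← Equiv.Perm.mul_apply, inv_mul_cancel, Equiv.Perm.one_apply]
    exact blk_pt k _
  have hs's : Function.RightInverse s' s := by
    intro k
    show blk (T (inn (s' k))) = k
    rw [(hs' k).1, ← Equiv.Perm.mul_apply, mul_inv_cancel, Equiv.Perm.one_apply]
    exact blk_pt k _
  set σ : Equiv.Perm (Fin m) := ⟨s, s', hss', hs's⟩ with hσdef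
  have hσ : ∀ k, σ k = s k := fun _ => rfl
  have hσ' : ∀ k, σ⁻¹ k = s' k := fun _ => rfl
  have hMf : Mf σ f = ⇑M := by
    funext p
    rcases eq_outp_or_innp f p with h | h
    · rw [h, Mf_outp]
      show innp f (σ (blk p)) = M (outp f (blk p))
      have : innp f (σ (blk p)) = inn (s (blk p)) := by rw [hσ]; rfl
      rw [this, (hs (blk p)).1, hTapp]
      congr 1
      show flp (inn (blk p)) = outp f (blk p)
      exact flp_innp f (blk p)
    · rw [h, Mf_innp]
      show outp f (σ⁻¹ (blk p)) = M (innp f (blk p))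
      have h2 : outp f (σ⁻¹ (blk p)) = flp (inn (s' (blk p))) := by
        rw [hσ']
        exact (flp_innp f (s' (blk p))).symm
      rw [h2, (hs' (blk p)).1, hTinvapp]
      exact flp_invol _
  have hiz : ∀ (i : ℤ) (k : Fin m), (T ^ i) (inn k) = inn ((σ ^ i) k) := by
    intro i k
    induction i using Int.induction_on with
    | zero => simp
    | succ i ih =>
      rw [zpow_add_one_apply, zpow_add_one_apply, ih, hσ]
      exact ((hs _).1).symm
    | pred i ih =>
      rw [show (-i : ℤ) - 1 = -i - 1 from rfl, zpow_sub_one_apply, zpow_sub_one_apply, ih, hσ']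
      exact ((hs' _).1).symm
  have hNrm : Nrm σ f := by
    intro k hk
    rw [mem_Mins] at hk
    have hTσ : ∀ {l : Fin m} {b : Bool}, T.SameCycle (inn k) (pt l b) → σ.SameCycle k l := by
      rintro l b ⟨i, hi⟩
      rw [hiz i k] at hi
      exact ⟨i, by have := congrArg blk hi; rwa [hinndef, blk_pt, blk_pt] at this⟩
    have h1 : σ.SameCycle k (t k) := by
      have hinnk : inn k = pt k (!f k) := rfl
      rcases htRk k with h2 | h2 <;> cases hfk : f k
      · refine hTσ (l := t k) (b := true) ?_
        rw [hinnk, hfk]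
        have h3 := SC_flp h2
        simpa using h3
      · refine hTσ (l := t k) (b := false) ?_
        rw [hinnk, hfk]
        simpa using h2
      · refine hTσ (l := t k) (b := false) ?_
        rw [hinnk, hfk]
        have h3 := SC_flp h2
        simpa using h3
      · refine hTσ (l := t k) (b := true) ?_
        rw [hinnk, hfk]
        simpa using h2
    have h2 : t k ≤ k := ht_le k k (hRrefl k)
    have h3 : k ≤ t k := hk _ h1
    have htk : t k = k := le_antisymm h2 h3
    show f k = false
    rw [hf]
    simp only [htk]
    apply decide_eq_false
    intro hsc
    have := noflipSC (pt k true)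
    rw [flp_pt] at this
    exact this (by simpa using hsc)
  exact ⟨σ, f, hNrm, hMf⟩





lemma zpow_fix {σ : Equiv.Perm (Fin m)} {k : Fin m} (h : σ k = k) : ∀ i : ℤ, (σ ^ i) k = k := by
  intro i
  induction i using Int.induction_on with
  | zero => simp
  | succ i ih => rw [zpow_add_one_apply, ih, h]
  | pred i ih =>
    rw [show (-i : ℤ) - 1 = -i - 1 from rfl, zpow_sub_one_apply, ih]
    rw [Equiv.Perm.inv_eq_iff_eq, h]

theorem card_Mins (σ : Equiv.Perm (Fin m)) : (Mins σ).card = cycleCount σ := by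
  classical
  have hfixmem : ∀ k : Fin m, σ k = k → k ∈ Mins σ := by
    intro k hk
    rw [mem_Mins]
    rintro j ⟨i, hi⟩
    rw [zpow_fix hk] at hi
    exact le_of_eq hi
  have hcompl : σ.supportᶜ ⊆ Mins σ := by
    intro k hk
    exact hfixmem k (by simpa [Equiv.Perm.notMem_support] using Finset.mem_compl.1 hk)
  have hsd : Mins σ \ σ.support = σ.supportᶜ := by
    ext k
    simp only [Finset.mem_sdiff, Finset.mem_compl]
    exact ⟨fun h => h.2, fun h => ⟨hcompl (Finset.mem_compl.2 h), h⟩⟩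
  have hsplit : (Mins σ ∩ σ.support).card + (Mins σ \ σ.support).card = (Mins σ).card :=
    Finset.card_inter_add_card_sdiff _ _
  have hfixcard : (Finset.univ.filter fun i => σ i = i).card = σ.supportᶜ.card := by
    congr 1
    ext k
    simp [Equiv.Perm.mem_support]
  have hbij : (Mins σ ∩ σ.support).card = σ.cycleFactorsFinset.card := by
    apply Finset.card_bij (fun k _ => σ.cycleOf k)
    · intro k hk
      exact Equiv.Perm.cycleOf_mem_cycleFactorsFinset_iff.2 (Finset.mem_inter.1 hk).2
    · intro k hk k' hk' he
      obtain ⟨hkM, hks⟩ := Finset.mem_inter.1 hk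
      obtain ⟨hk'M, hk's⟩ := Finset.mem_inter.1 hk'
      have h1 : k' ∈ (σ.cycleOf k').support :=
        Equiv.Perm.mem_support_cycleOf_iff.2 ⟨Equiv.Perm.SameCycle.refl _ _, hk's⟩
      rw [← he] at h1
      have h2 : σ.SameCycle k k' := (Equiv.Perm.mem_support_cycleOf_iff.1 h1).1
      exact le_antisymm ((mem_Mins.1 hkM) k' h2) ((mem_Mins.1 hk'M) k h2.symm)
    · intro γ hγ
      obtain ⟨hγc, hγs⟩ := Equiv.Perm.mem_cycleFactorsFinset_iff.1 hγ
      have hns : γ.support.Nonempty := by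
        rw [Finset.nonempty_iff_ne_empty, Ne, Equiv.Perm.support_eq_empty_iff]
        exact hγc.ne_one
      set u := γ.support.min' hns with hu
      have hus : u ∈ γ.support := γ.support.min'_mem hns
      have hγeq : γ = σ.cycleOf u := Equiv.Perm.cycle_is_cycleOf hus hγ
      have husupp : u ∈ σ.support := by
        rw [Equiv.Perm.mem_support, ← hγs u hus]
        exact Equiv.Perm.mem_support.1 hus
      have huM : u ∈ Mins σ := by
        rw [mem_Mins]
        intro j hj
        have : j ∈ (σ.cycleOf u).support :=
          Equiv.Perm.mem_support_cycleOf_iff.2 ⟨hj, husupp⟩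
        rw [← hγeq] at this
        exact γ.support.min'_le j this
      exact ⟨u, Finset.mem_inter.2 ⟨huM, husupp⟩, hγeq.symm⟩
  have hct : σ.cycleType.card = σ.cycleFactorsFinset.card := by
    simp [Equiv.Perm.cycleType]
  rw [cycleCount, hct, hfixcard, ← hsplit, hbij, hsd]

theorem Mins_nonempty (hm : 0 < m) (σ : Equiv.Perm (Fin m)) : (Mins σ).Nonempty := by
  classical
  set k0 : Fin m := ⟨0, hm⟩
  set S : Finset (Fin m) := Finset.filter (σ.SameCycle k0) Finset.univ with hS
  have hmem : ∀ j, j ∈ S ↔ σ.SameCycle k0 j := by intro j; simp [hS]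
  have hne : S.Nonempty := ⟨k0, (hmem k0).2 (Equiv.Perm.SameCycle.refl _ _)⟩
  refine ⟨S.min' hne, ?_⟩
  rw [mem_Mins]
  intro j hj
  have h1 : σ.SameCycle k0 (S.min' hne) := (hmem _).1 (S.min'_mem hne)
  exact S.min'_le j ((hmem j).2 (h1.trans hj))

theorem cycleCount_mem (hm : 0 < m) (σ : Equiv.Perm (Fin m)) :
    cycleCount σ ∈ Finset.Icc 1 m := by
  rw [Finset.mem_Icc, ← card_Mins]
  constructor
  · exact Nat.one_le_iff_ne_zero.2 (Finset.card_ne_zero_of_mem (Mins_nonempty hm σ).choose_spec)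
  · simpa using Finset.card_le_card (Finset.subset_univ (Mins σ))

theorem card_Nrm (σ : Equiv.Perm (Fin m)) :
    Nat.card {f : Fin m → Bool // Nrm σ f} = 2 ^ (m - cycleCount σ) := by
  classical
  have e : {f : Fin m → Bool // Nrm σ f} ≃ (↥((Mins σ)ᶜ) → Bool) :=
    { toFun := fun f k => f.1 k.1
      invFun := fun g =>
        ⟨fun k => if h : k ∈ Mins σ then false else g ⟨k, Finset.mem_compl.2 h⟩,
          fun k hk => by simp [hk]⟩
      left_inv := by
        intro f
        ext k
        by_cases h : k ∈ Mins σ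
        · simp [h, (f.2 k h).symm]
        · simp [h]
      right_inv := by
        intro g
        funext k
        have : (k : Fin m) ∉ Mins σ := Finset.mem_compl.1 k.2
        simp [this] }
  rw [Nat.card_congr e, Nat.card_eq_fintype_card, Fintype.card_fun, Fintype.card_bool,
    Fintype.card_coe, Finset.card_compl, card_Mins]
  simp


theorem MP_mem (L : List ℕ) (c : Fin L.headI → ℕ) (σ : Equiv.Perm (Fin L.headI))
    (f : Fin L.headI → Bool) (hcd : (c, σ) ∈ ColoredDerangements L) :
    (c, MP σ f) ∈ ColoredMatchDerangements L := by
  obtain ⟨⟨hbound, hmono⟩, hder⟩ := hcd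
  refine ⟨⟨Mf_invol σ f, Mf_ne σ f, hbound, ?_⟩, ?_⟩
  · intro p
    show c (blk (Mf σ f p)) = c (blk p)
    rcases eq_outp_or_innp f p with h | h
    · conv_lhs => rw [h, Mf_outp]
      rw [blk_innp]
      exact hmono (blk p)
    · conv_lhs => rw [h, Mf_innp]
      rw [blk_outp]
      have := hmono (σ⁻¹ (blk p))
      rw [← Equiv.Perm.mul_apply, mul_inv_cancel, Equiv.Perm.one_apply] at this
      exact this.symm
  · intro p hp
    show c (blk p) ≠ 1
    replace hp : blk (Mf σ f p) = blk p := hp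
    rcases eq_outp_or_innp f p with h | h
    · rw [h, Mf_outp, blk_innp, blk_outp] at hp
      exact hder (blk p) hp
    · rw [h, Mf_innp, blk_outp, blk_innp] at hp
      have h2 : σ (blk p) = blk p := by
        conv_lhs => rw [← hp]
        rw [← Equiv.Perm.mul_apply, mul_inv_cancel, Equiv.Perm.one_apply]
      exact hder (blk p) h2

theorem CD_finite (L : List ℕ) : (ColoredDerangements L).Finite := by
  classical
  have h1 : (Set.pi Set.univ fun i : Fin L.headI =>
      Set.Icc 1 (conjP L (i.1 + 1))).Finite :=
    Set.Finite.pi fun i => Set.finite_Icc _ _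
  have h2 : ((Set.pi Set.univ fun i : Fin L.headI => Set.Icc 1 (conjP L (i.1 + 1))) ×ˢ
      (Set.univ : Set (Equiv.Perm (Fin L.headI)))).Finite := h1.prod Set.finite_univ
  apply h2.subset
  rintro ⟨c, σ⟩ ⟨⟨hb, _⟩, _⟩
  exact ⟨fun i _ => Set.mem_Icc.2 (hb i), Set.mem_univ _⟩

end JD

/-- `|D′_λ| = Σ_{k=1}^{λ₁} d^λ_k · 2^{λ₁−k}`. -/
theorem matchDerangements_card_eq_jackD_two (L : List ℕ) (hL : IsPartition L)
    (hne : L ≠ []) :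
    (ColoredMatchDerangements L).ncard =
      ∑ k ∈ Finset.Icc 1 L.headI, dCount L k * 2 ^ (L.headI - k) := by
  classical
  have hm : 0 < L.headI := by
    cases L with
    | nil => exact absurd rfl hne
    | cons a l => simpa using hL.2 a (List.mem_cons_self (a := a) (l := l))
  set Good : Set (((Fin L.headI → ℕ) × Equiv.Perm (Fin L.headI)) × (Fin L.headI → Bool)) :=
    {y | y.1 ∈ ColoredDerangements L ∧ JD.Nrm y.1.2 y.2} with hGood
  set Phi : (((Fin L.headI → ℕ) × Equiv.Perm (Fin L.headI)) × (Fin L.headI → Bool)) →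
      ((Fin L.headI → ℕ) × Equiv.Perm (Fin (2 * L.headI))) :=
    fun y => (y.1.1, JD.MP y.1.2 y.2) with hPhi
  have hbij : Set.BijOn Phi Good (ColoredMatchDerangements L) := by
    refine ⟨?_, ?_, ?_⟩
    · rintro ⟨⟨c, σ⟩, f⟩ hy
      exact JD.MP_mem L c σ f hy.1
    · rintro ⟨⟨c, σ⟩, f⟩ hy ⟨⟨c', σ'⟩, f'⟩ hy' he
      have h1 : c = c' := congrArg Prod.fst he
      have h2 : JD.MP σ f = JD.MP σ' f' := congrArg Prod.snd he
      have h3 : JD.Mf σ f = JD.Mf σ' f' := congrArg (fun (e : Equiv.Perm _) => ⇑e) h2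
      obtain ⟨h4, h5⟩ := JD.Mf_inj hy.2 hy'.2 h3
      have h4' : σ = σ' := h4
      have h5' : f = f' := h5
      simp [h1, h4', h5']
    · rintro ⟨c, M⟩ hx
      obtain ⟨⟨hInv, hne', hbound, hcol⟩, hder⟩ := hx
      obtain ⟨σ, f, hNrm, hMf⟩ := JD.exists_pre M hInv hne'
      have hMP : JD.MP σ f = M := Equiv.ext fun p => congrFun hMf p
      have hσk : ∀ k, σ k = blk (M (JD.outp f k)) := by
        intro k
        rw [← hMP]
        show σ k = blk (JD.Mf σ f (JD.outp f k))
        rw [JD.Mf_outp, JD.blk_innp]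
      refine ⟨((c, σ), f), ⟨⟨⟨hbound, ?_⟩, ?_⟩, hNrm⟩, ?_⟩
      · intro k
        rw [hσk k]
        have := hcol (JD.outp f k)
        rwa [JD.blk_outp] at this
      · intro k hk
        have h6 : blk (M (JD.outp f k)) = blk (JD.outp f k) := by
          rw [← hσk k, hk, JD.blk_outp]
        have := hder (JD.outp f k) h6
        rwa [JD.blk_outp] at this
      · show (c, JD.MP σ f) = (c, M)
        rw [hMP]
  have step1 : (ColoredMatchDerangements L).ncard = Good.ncard := by
    rw [← hbij.image_eq]
    exact Set.ncard_image_of_injOn hbij.injOn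
  haveI hFin : Fintype ↥(ColoredDerangements L) := (JD.CD_finite L).fintype
  have e : ↥Good ≃
      (Σ x : ↥(ColoredDerangements L), {f : Fin L.headI → Bool // JD.Nrm x.1.2 f}) :=
    { toFun := fun y => ⟨⟨y.1.1, y.2.1⟩, ⟨y.1.2, y.2.2⟩⟩
      invFun := fun z => ⟨(z.1.1, z.2.1), ⟨z.1.2, z.2.2⟩⟩
      left_inv := fun y => rfl
      right_inv := fun z => rfl }
  have step2 : Good.ncard =
      ∑ x : ↥(ColoredDerangements L), 2 ^ (L.headI - cycleCount x.1.2) := by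
    rw [← Nat.card_coe_set_eq, Nat.card_congr e, Nat.card_eq_fintype_card,
      Fintype.card_sigma]
    exact Finset.sum_congr rfl fun x _ => by
      rw [← Nat.card_eq_fintype_card, JD.card_Nrm]
  have step3 : ∑ x : ↥(ColoredDerangements L), 2 ^ (L.headI - cycleCount x.1.2)
      = ∑ k ∈ Finset.Icc 1 L.headI, dCount L k * 2 ^ (L.headI - k) := by
    rw [← Finset.sum_fiberwise_of_maps_to
      (g := fun x : ↥(ColoredDerangements L) => cycleCount x.1.2)
      (fun x _ => JD.cycleCount_mem hm x.1.2)
      (fun x => 2 ^ (L.headI - cycleCount x.1.2))]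
    apply Finset.sum_congr rfl
    intro k hk
    have hterm : ∀ x ∈ Finset.univ.filter
        (fun x : ↥(ColoredDerangements L) => cycleCount x.1.2 = k),
        2 ^ (L.headI - cycleCount x.1.2) = 2 ^ (L.headI - k) := by
      intro x hx
      rw [(Finset.mem_filter.1 hx).2]
    rw [Finset.sum_congr rfl hterm, Finset.sum_const, smul_eq_mul]
    congr 1
    rw [dCount, ← Nat.card_coe_set_eq]
    have e2 : ↥{x | x ∈ ColoredDerangements L ∧ cycleCount x.2 = k} ≃
        {y : ↥(ColoredDerangements L) // cycleCount y.1.2 = k} :=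
      { toFun := fun x => ⟨⟨x.1, x.2.1⟩, x.2.2⟩
        invFun := fun y => ⟨y.1.1, y.1.2, y.2⟩
        left_inv := fun x => rfl
        right_inv := fun y => rfl }
    rw [Nat.card_congr e2, Nat.card_eq_fintype_card, Fintype.card_subtype]
  rw [step1, step2, step3]
end

section
/- (Split lemma.) Let λ be an integer partition with m := λ₁ ≥ 1, let α ∈ ℝ, and set h_j := α(m − j) + λ′_j for 1 ≤ j ≤ m. For 1 ≤ i ≤ m define the sequence g^{(i)} of length m−1 by g^{(i)}_t := h_t − α for t < i and g^{(i)}_t := h_{t+1} for t ≥ i (the first-row lower hook lengths of λ with column i deleted). For a finite sequence u = (u_1,…,u_r) and integer j ≥ 0 set F(u, j) := Π_{l=0}^{j} ((j+1)α − u_{r−l}), F(u, −1) := 1, and G(u, j) := Π_{t=1}^{r−j} (u_t − jα). Then for every integer 0 ≤ j ≤ m−1: α · Σ_{i=1}^{m} F(g^{(i)}, j−1) · G(g^{(i)}, j) = F(h, j−1) · G(h, j) + F(h, j) · G(h, j+1). -/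
open Finset

/-- `Fcorr α u r j = F(u, j−1) = Π_{l=0}^{j−1} (jα − u_{r−l})`, so `F(u,−1) = Fcorr α u r 0 = 1`
and `F(u, j) = Fcorr α u r (j+1)`. -/
noncomputable def Fcorr (α : ℝ) (u : ℕ → ℝ) (r j : ℕ) : ℝ :=
  ∏ l ∈ Finset.range j, ((j : ℝ) * α - u (r - l))

/-- `Glhp α u r j = G(u, j) = Π_{t=1}^{r−j} (u_t − jα)`. -/
noncomputable def Glhp (α : ℝ) (u : ℕ → ℝ) (r j : ℕ) : ℝ :=
  ∏ t ∈ Finset.Icc 1 (r - j), (u t - (j : ℝ) * α)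

/-! ### Auxiliary material for the split lemma -/

lemma Icc_one_prod (f : ℕ → ℝ) (k : ℕ) :
    ∏ t ∈ Finset.Icc 1 k, f t = ∏ t ∈ Finset.range k, f (t + 1) := by
  rw [← Finset.Ico_add_one_right_eq_Icc, Finset.prod_Ico_eq_prod_range]
  exact Finset.prod_congr (by rw [Nat.add_sub_cancel]) (fun t _ => by rw [Nat.add_comm])

lemma Icc_one_sum (f : ℕ → ℝ) (k : ℕ) :
    ∑ t ∈ Finset.Icc 1 k, f t = ∑ t ∈ Finset.range k, f (t + 1) := by
  rw [← Finset.Ico_add_one_right_eq_Icc, Finset.sum_Ico_eq_sum_range]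
  exact Finset.sum_congr (by rw [Nat.add_sub_cancel]) (fun t _ => by rw [Nat.add_comm])

/-- Telescoping auxiliary product for the "left" part of the split sum. -/
noncomputable def Pfun (α : ℝ) (H : ℕ → ℝ) (n j : ℕ) (s : ℕ) : ℝ :=
  (∏ t ∈ Finset.range s, (H (t + 1) - ((j : ℝ) + 1) * α)) *
    ∏ t ∈ Finset.range (n + 1 - s), (H (s + 1 + t) - (j : ℝ) * α)

/-- Telescoping auxiliary product for the "right" part of the split sum. -/
noncomputable def Rfun (α : ℝ) (H : ℕ → ℝ) (n j : ℕ) (s : ℕ) : ℝ :=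
  (∏ l ∈ Finset.range (j - s), ((j : ℝ) * α - H (n + j + 1 - l))) *
    ∏ l ∈ Finset.range (s + 1), (((j : ℝ) + 1) * α - H (n + j + 1 - (j - s + l)))

lemma prod_range_split (f : ℕ → ℝ) (k m : ℕ) (h : k ≤ m) :
    ∏ t ∈ Finset.range m, f t =
      (∏ t ∈ Finset.range k, f t) * ∏ t ∈ Finset.range (m - k), f (k + t) := by
  calc ∏ t ∈ Finset.range m, f t = ∏ t ∈ Finset.range (k + (m - k)), f t := by
        rw [Nat.add_sub_cancel' h]
    _ = _ := Finset.prod_range_add f k (m - k)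

lemma split_key (n j : ℕ) (α : ℝ) (H : ℕ → ℝ) :
    α * ∑ i ∈ Finset.Icc 1 (n + j + 1),
          Fcorr α (fun t => if t < i then H t - α else H (t + 1)) (n + j) j *
            Glhp α (fun t => if t < i then H t - α else H (t + 1)) (n + j) j =
      Fcorr α H (n + j + 1) j * Glhp α H (n + j + 1) j +
        Fcorr α H (n + j + 1) (j + 1) * Glhp α H (n + j + 1) (j + 1) := by
  set T : ℕ → ℝ := fun i =>
    Fcorr α (fun t => if t < i then H t - α else H (t + 1)) (n + j) j *
      Glhp α (fun t => if t < i then H t - α else H (t + 1)) (n + j) j with hT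
  -- Step A : terms with 1 ≤ i ≤ n + 1
  have hA : ∀ s ∈ Finset.range (n + 1),
      α * T (s + 1) =
        Fcorr α H (n + j + 1) j * (Pfun α H n j s - Pfun α H n j (s + 1)) := by
    intro s hs
    rw [Finset.mem_range] at hs
    have hF : Fcorr α (fun t => if t < s + 1 then H t - α else H (t + 1)) (n + j) j =
        Fcorr α H (n + j + 1) j := by
      unfold Fcorr
      refine Finset.prod_congr rfl (fun l hl => ?_)
      rw [Finset.mem_range] at hl
      simp only
      rw [if_neg (by omega), show n + j - l + 1 = n + j + 1 - l from by omega]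
    have hG : α * Glhp α (fun t => if t < s + 1 then H t - α else H (t + 1)) (n + j) j =
        Pfun α H n j s - Pfun α H n j (s + 1) := by
      have hsplit : Glhp α (fun t => if t < s + 1 then H t - α else H (t + 1)) (n + j) j =
          (∏ t ∈ Finset.range s, (H (t + 1) - ((j : ℝ) + 1) * α)) *
            ∏ t ∈ Finset.range (n - s), (H (s + 1 + t + 1) - (j : ℝ) * α) := by
        unfold Glhp
        rw [Nat.add_sub_cancel, Icc_one_prod, prod_range_split _ s n (by omega)]
        congr 1
        · refine Finset.prod_congr rfl (fun t ht => ?_)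
          rw [Finset.mem_range] at ht
          beta_reduce
          rw [if_pos (by omega)]
          ring
        · refine Finset.prod_congr rfl (fun t _ => ?_)
          beta_reduce
          rw [if_neg (by omega), show s + t + 1 + 1 = s + 1 + t + 1 from by omega]
      have hP1 : Pfun α H n j s =
          (∏ t ∈ Finset.range s, (H (t + 1) - ((j : ℝ) + 1) * α)) *
            ((H (s + 1) - (j : ℝ) * α) *
              ∏ t ∈ Finset.range (n - s), (H (s + 1 + t + 1) - (j : ℝ) * α)) := by
        unfold Pfun
        rw [show n + 1 - s = (n - s) + 1 from by omega, Finset.prod_range_succ',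
          Nat.add_zero,
          show (∏ t ∈ Finset.range (n - s), (H (s + 1 + (t + 1)) - (j : ℝ) * α)) =
            ∏ t ∈ Finset.range (n - s), (H (s + 1 + t + 1) - (j : ℝ) * α) from
            Finset.prod_congr rfl (fun t _ => by
              rw [show s + 1 + (t + 1) = s + 1 + t + 1 from by omega])]
        ring
      have hP2 : Pfun α H n j (s + 1) =
          ((∏ t ∈ Finset.range s, (H (t + 1) - ((j : ℝ) + 1) * α)) *
              (H (s + 1) - ((j : ℝ) + 1) * α)) *
            ∏ t ∈ Finset.range (n - s), (H (s + 1 + t + 1) - (j : ℝ) * α) := by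
        unfold Pfun
        rw [Finset.prod_range_succ]
        congr 1
        refine Finset.prod_congr (by congr 1; omega) (fun t _ => ?_)
        rw [show s + 1 + 1 + t = s + 1 + t + 1 from by omega]
      rw [hsplit, hP1, hP2]
      ring
    rw [hT]
    simp only
    rw [show α * (Fcorr α (fun t => if t < s + 1 then H t - α else H (t + 1)) (n + j) j *
        Glhp α (fun t => if t < s + 1 then H t - α else H (t + 1)) (n + j) j) =
        Fcorr α (fun t => if t < s + 1 then H t - α else H (t + 1)) (n + j) j *
          (α * Glhp α (fun t => if t < s + 1 then H t - α else H (t + 1)) (n + j) j)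
      from by ring, hF, hG]
  -- Step B : terms with n + 2 ≤ i ≤ n + j + 1
  have hB : ∀ s ∈ Finset.range j,
      α * T (n + 1 + s + 1) =
        (Rfun α H n j (s + 1) - Rfun α H n j s) * Glhp α H (n + j + 1) (j + 1) := by
    intro s hs
    rw [Finset.mem_range] at hs
    have hG : Glhp α (fun t => if t < n + 1 + s + 1 then H t - α else H (t + 1)) (n + j) j =
        Glhp α H (n + j + 1) (j + 1) := by
      unfold Glhp
      rw [Nat.add_sub_cancel, show n + j + 1 - (j + 1) = n from by omega]
      refine Finset.prod_congr rfl (fun t ht => ?_)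
      rw [Finset.mem_Icc] at ht
      simp only
      rw [if_pos (by omega)]
      push_cast
      ring
    have hF : α * Fcorr α (fun t => if t < n + 1 + s + 1 then H t - α else H (t + 1)) (n + j) j =
        Rfun α H n j (s + 1) - Rfun α H n j s := by
      have hsplit : Fcorr α (fun t => if t < n + 1 + s + 1 then H t - α else H (t + 1))
            (n + j) j =
          (∏ l ∈ Finset.range (j - s - 1), ((j : ℝ) * α - H (n + j + 1 - l))) *
            ∏ l ∈ Finset.range (s + 1), (((j : ℝ) + 1) * α - H (n + s + 1 - l)) := by
        unfold Fcorr
        rw [prod_range_split _ (j - s - 1) j (by omega)]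
        congr 1
        · refine Finset.prod_congr rfl (fun l hl => ?_)
          rw [Finset.mem_range] at hl
          beta_reduce
          rw [if_neg (by omega), show n + j - l + 1 = n + j + 1 - l from by omega]
        · refine Finset.prod_congr (by rw [show j - (j - s - 1) = s + 1 from by omega])
            (fun l hl => ?_)
          rw [Finset.mem_range] at hl
          beta_reduce
          rw [if_pos (by omega), show n + j - (j - s - 1 + l) = n + s + 1 - l from by omega]
          ring
      have hR1 : Rfun α H n j (s + 1) =
          (∏ l ∈ Finset.range (j - s - 1), ((j : ℝ) * α - H (n + j + 1 - l))) *
            ((∏ l ∈ Finset.range (s + 1), (((j : ℝ) + 1) * α - H (n + s + 1 - l))) *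
              (((j : ℝ) + 1) * α - H (n + s + 2))) := by
        unfold Rfun
        rw [show j - (s + 1) = j - s - 1 from by omega]
        have e : ∏ l ∈ Finset.range (s + 1 + 1),
              (((j : ℝ) + 1) * α - H (n + j + 1 - (j - s - 1 + l))) =
            (∏ l ∈ Finset.range (s + 1), (((j : ℝ) + 1) * α - H (n + s + 1 - l))) *
              (((j : ℝ) + 1) * α - H (n + s + 2)) := by
          rw [Finset.prod_range_succ']
          congr 1
          · refine Finset.prod_congr rfl (fun l hl => ?_)
            rw [Finset.mem_range] at hl
            rw [show n + j + 1 - (j - s - 1 + (l + 1)) = n + s + 1 - l from by omega]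
          · rw [show n + j + 1 - (j - s - 1 + 0) = n + s + 2 from by omega]
        rw [e]
      have hR2 : Rfun α H n j s =
          ((∏ l ∈ Finset.range (j - s - 1), ((j : ℝ) * α - H (n + j + 1 - l))) *
              ((j : ℝ) * α - H (n + s + 2))) *
            ∏ l ∈ Finset.range (s + 1), (((j : ℝ) + 1) * α - H (n + s + 1 - l)) := by
        unfold Rfun
        have hc : ∏ l ∈ Finset.range (j - s), ((j : ℝ) * α - H (n + j + 1 - l)) =
            (∏ l ∈ Finset.range (j - s - 1), ((j : ℝ) * α - H (n + j + 1 - l))) *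
              ((j : ℝ) * α - H (n + s + 2)) := by
          rw [show n + s + 2 = n + j + 1 - (j - s - 1) from by omega,
            ← Finset.prod_range_succ (fun l => (j : ℝ) * α - H (n + j + 1 - l)) (j - s - 1),
            show j - s - 1 + 1 = j - s from by omega]
        rw [hc]
        congr 1
        refine Finset.prod_congr rfl (fun l hl => ?_)
        rw [Finset.mem_range] at hl
        rw [show n + j + 1 - (j - s + l) = n + s + 1 - l from by omega]
      rw [hsplit, hR1, hR2]
      ring
    rw [hT]
    simp only
    rw [show α * (Fcorr α (fun t => if t < n + 1 + s + 1 then H t - α else H (t + 1)) (n + j) j *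
        Glhp α (fun t => if t < n + 1 + s + 1 then H t - α else H (t + 1)) (n + j) j) =
        (α * Fcorr α (fun t => if t < n + 1 + s + 1 then H t - α else H (t + 1)) (n + j) j) *
          Glhp α (fun t => if t < n + 1 + s + 1 then H t - α else H (t + 1)) (n + j) j
      from by ring, hF, hG]
  -- boundary values of the telescoping products
  have hP0 : Pfun α H n j 0 = Glhp α H (n + j + 1) j := by
    unfold Pfun Glhp
    rw [show n + j + 1 - j = n + 1 from by omega, Icc_one_prod, Finset.prod_range_zero,
      one_mul, Nat.sub_zero]
    refine Finset.prod_congr rfl (fun t _ => ?_)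
    rw [show 0 + 1 + t = t + 1 from by omega]
  have hPn : Pfun α H n j (n + 1) =
      Glhp α H (n + j + 1) (j + 1) * (H (n + 1) - ((j : ℝ) + 1) * α) := by
    unfold Pfun Glhp
    rw [Nat.sub_self, Finset.prod_range_zero, mul_one, Finset.prod_range_succ,
      show n + j + 1 - (j + 1) = n from by omega, Icc_one_prod]
    congr 1
    refine Finset.prod_congr rfl (fun t _ => ?_)
    push_cast
    ring
  have hR0 : Rfun α H n j 0 = Fcorr α H (n + j + 1) j * (((j : ℝ) + 1) * α - H (n + 1)) := by
    unfold Rfun Fcorr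
    rw [Nat.sub_zero, Finset.prod_range_one, show n + j + 1 - (j + 0) = n + 1 from by omega]
  have hRj : Rfun α H n j j = Fcorr α H (n + j + 1) (j + 1) := by
    unfold Rfun Fcorr
    rw [Nat.sub_self, Finset.prod_range_zero, one_mul]
    refine Finset.prod_congr rfl (fun l hl => ?_)
    rw [Finset.mem_range] at hl
    push_cast
    rw [zero_add]
  -- assemble
  rw [show (∑ i ∈ Finset.Icc 1 (n + j + 1), T i) = ∑ i ∈ Finset.range (n + j + 1), T (i + 1)
    from Icc_one_sum T (n + j + 1)]
  rw [show n + j + 1 = (n + 1) + j from by omega, Finset.sum_range_add, mul_add,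
    Finset.mul_sum, Finset.mul_sum]
  rw [Finset.sum_congr rfl hA, Finset.sum_congr rfl hB]
  rw [← Finset.mul_sum, Finset.sum_range_sub' (Pfun α H n j) (n + 1),
    ← Finset.sum_mul, Finset.sum_range_sub (Rfun α H n j) j]
  rw [hP0, hPn, hR0, hRj]
  ring

/-- Split lemma:
`α · Σ_{i=1}^{m} F(g^{(i)}, j−1) · G(g^{(i)}, j) = F(h, j−1)·G(h, j) + F(h, j)·G(h, j+1)`,
where `g^{(i)}` is the sequence of first-row lower hook lengths of `λ` with column `i`
deleted. -/
theorem split_lemma (L : List ℕ) (hL : IsPartition L) (hm : 1 ≤ L.headI) (α : ℝ)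
    (j : ℕ) (hj : j ≤ L.headI - 1) :
    α * ∑ i ∈ Finset.Icc 1 L.headI,
          Fcorr α (fun t => if t < i then hlow L α t - α else hlow L α (t + 1))
              (L.headI - 1) j *
            Glhp α (fun t => if t < i then hlow L α t - α else hlow L α (t + 1))
              (L.headI - 1) j =
      Fcorr α (hlow L α) L.headI j * Glhp α (hlow L α) L.headI j +
        Fcorr α (hlow L α) L.headI (j + 1) * Glhp α (hlow L α) L.headI (j + 1) := by
  obtain ⟨n, hn⟩ : ∃ n, L.headI = n + j + 1 := ⟨L.headI - j - 1, by omega⟩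
  have h1 : L.headI - 1 = n + j := by omega
  rw [h1, hn]
  exact split_key n j α (hlow L α)
end

section
/- For every integer partition λ with m := λ₁, every real α, and every integer 0 ≤ k ≤ m, writing h_j := α(m − j) + λ′_j: α^k · k! · Σ_{I ⊆ {1,…,m}, |I| = k} Π_{j ∉ I} ( h_j − α·#{i ∈ I : i > j} ) = Σ_{j=0}^{k} (−1)^j · C(k, j) · Π_{i=1}^{m} (h_i − jα). (The left-hand inner product is the principal lower hook product of λ with the columns indexed by I deleted; equivalently, the k-th order finite difference of the polynomial x ↦ Π_i(h_i − xα) at 0 is, up to sign and a factorial, the sum of principal lower hook products over all deletions of k columns.) -/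
open Finset

section KthFiniteDifferenceAux

private lemma kfd_tel (f g : ℕ → ℝ) : ∀ (S : Finset ℕ),
    ∏ j ∈ S, f j - ∏ j ∈ S, g j
    = ∑ t ∈ S, (∏ j ∈ S.filter (· < t), g j) * (f t - g t) * ∏ j ∈ S.filter (t < ·), f j := by
  intro S
  induction S using Finset.induction_on_max with
  | empty => simp
  | insert a S ha ih =>
    have haS : a ∉ S := fun h => lt_irrefl a (ha a h)
    rw [Finset.prod_insert haS, Finset.prod_insert haS, Finset.sum_insert haS]
    have h1 : (insert a S).filter (· < a) = S := by
      ext b; simp only [Finset.mem_filter, Finset.mem_insert]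
      constructor
      · rintro ⟨h | h, hb⟩ <;> [omega; exact h]
      · intro hb; exact ⟨Or.inr hb, ha b hb⟩
    have h2 : (insert a S).filter (a < ·) = ∅ := by
      ext b; simp only [Finset.mem_filter, Finset.mem_insert, Finset.notMem_empty, iff_false]
      rintro ⟨h | h, hb⟩ <;> [omega; exact absurd (ha b h) (by omega)]
    have h3 : ∀ t ∈ S, (insert a S).filter (· < t) = S.filter (· < t) := by
      intro t ht; ext b
      simp only [Finset.mem_filter, Finset.mem_insert]
      constructor
      · rintro ⟨h | h, hb⟩
        · exact absurd (ha t ht) (by omega)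
        · exact ⟨h, hb⟩
      · exact fun ⟨h, hb⟩ => ⟨Or.inr h, hb⟩
    have h4 : ∀ t ∈ S, (insert a S).filter (t < ·) = insert a (S.filter (t < ·)) := by
      intro t ht; ext b
      simp only [Finset.mem_filter, Finset.mem_insert]
      constructor
      · rintro ⟨h | h, hb⟩
        · exact Or.inl h
        · exact Or.inr ⟨h, hb⟩
      · rintro (h | ⟨h, hb⟩)
        · exact ⟨Or.inl h, h ▸ ha t ht⟩
        · exact ⟨Or.inr h, hb⟩
    rw [h1, h2]
    have h5 : ∑ t ∈ S, (∏ j ∈ (insert a S).filter (· < t), g j) * (f t - g t) *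
        ∏ j ∈ (insert a S).filter (t < ·), f j
        = ∑ t ∈ S, f a * ((∏ j ∈ S.filter (· < t), g j) * (f t - g t) *
            ∏ j ∈ S.filter (t < ·), f j) := by
      refine Finset.sum_congr rfl fun t ht => ?_
      rw [h3 t ht, h4 t ht, Finset.prod_insert (by simp [haS])]
      ring
    rw [h5, ← Finset.mul_sum, ← ih]
    simp only [Finset.prod_empty]
    ring

private lemma kfd_prod_erase_split (h : ℕ → ℝ) (T : Finset ℕ) (t : ℕ) :
    (∏ j ∈ T.filter (· < t), h j) * ∏ j ∈ T.filter (t < ·), h j = ∏ j ∈ T.erase t, h j := by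
  rw [← Finset.prod_union (by
    simp only [Finset.disjoint_left, Finset.mem_filter]
    rintro b ⟨_, h1⟩ ⟨_, h2⟩; omega)]
  congr 1
  ext b
  simp only [Finset.mem_union, Finset.mem_filter, Finset.mem_erase]
  by_cases hbT : b ∈ T <;> simp [hbT] <;> omega

private lemma kfd_double_count (S : Finset ℕ) (k : ℕ) (F : Finset ℕ → ℝ) :
    ∑ I ∈ S.powersetCard k, ∑ t ∈ S \ I, F (insert t I)
    = ((k : ℝ) + 1) * ∑ J ∈ S.powersetCard (k + 1), F J := by
  have key : ∑ I ∈ S.powersetCard k, ∑ t ∈ S \ I, F (insert t I)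
      = ∑ J ∈ S.powersetCard (k + 1), ∑ t ∈ J, F J := by
    rw [Finset.sum_sigma', Finset.sum_sigma']
    refine Finset.sum_nbij' (fun p => ⟨insert p.2 p.1, p.2⟩) (fun p => ⟨p.1.erase p.2, p.2⟩)
      ?_ ?_ ?_ ?_ ?_
    · rintro ⟨I, t⟩ hp
      rw [Finset.mem_sigma, Finset.mem_powersetCard] at hp ⊢
      obtain ⟨⟨hIS, hIc⟩, htI⟩ := hp
      rw [Finset.mem_sdiff] at htI
      exact ⟨⟨Finset.insert_subset htI.1 hIS,
        by rw [Finset.card_insert_of_notMem htI.2, hIc]⟩, Finset.mem_insert_self _ _⟩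
    · rintro ⟨J, t⟩ hp
      rw [Finset.mem_sigma, Finset.mem_powersetCard] at hp ⊢
      obtain ⟨⟨hJS, hJc⟩, htJ⟩ := hp
      refine ⟨⟨(Finset.erase_subset _ _).trans hJS,
        by rw [Finset.card_erase_of_mem htJ, hJc]; omega⟩, ?_⟩
      exact Finset.mem_sdiff.mpr ⟨hJS htJ, Finset.notMem_erase _ _⟩
    · rintro ⟨I, t⟩ hp
      rw [Finset.mem_sigma] at hp
      have htI := (Finset.mem_sdiff.mp hp.2).2
      simp [Finset.erase_insert htI]
    · rintro ⟨J, t⟩ hp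
      rw [Finset.mem_sigma] at hp
      simp [Finset.insert_erase hp.2]
    · rintro ⟨I, t⟩ _; rfl
  rw [key, Finset.mul_sum]
  refine Finset.sum_congr rfl fun J hJ => ?_
  rw [Finset.sum_const, (Finset.mem_powersetCard.mp hJ).2]
  push_cast
  ring

private lemma kfd_main_lemma (f : ℕ → ℝ) (α : ℝ) (S : Finset ℕ) :
    ∀ (k : ℕ) (x : ℕ),
    α ^ k * (k.factorial : ℝ) *
      ∑ I ∈ S.powersetCard k, ∏ j ∈ S \ I,
        (f j - ((x : ℝ) + ((I.filter fun i => j < i).card : ℝ)) * α)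
    = (-1 : ℝ) ^ k * (fwdDiff 1)^[k] (fun y : ℕ => ∏ i ∈ S, (f i - (y : ℝ) * α)) x := by
  intro k
  induction k with
  | zero =>
    intro x
    simp [Finset.powersetCard_zero]
  | succ k ih =>
    intro x
    set P : ℕ → ℝ := fun y : ℕ => ∏ i ∈ S, (f i - (y : ℝ) * α) with hP
    have hR : (-1 : ℝ) ^ (k + 1) * (fwdDiff 1)^[k + 1] P x
        = (-1 : ℝ) ^ k * (fwdDiff 1)^[k] P x - (-1 : ℝ) ^ k * (fwdDiff 1)^[k] P (x + 1) := by
      rw [Function.iterate_succ_apply']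
      simp only [fwdDiff, pow_succ]
      ring
    rw [hR, ← ih x, ← ih (x + 1)]
    have key : ∀ I ∈ S.powersetCard k,
        ∏ j ∈ S \ I, (f j - ((x : ℝ) + ((I.filter fun i => j < i).card : ℝ)) * α)
          - ∏ j ∈ S \ I, (f j - (((x : ℕ) + 1 : ℕ) + ((I.filter fun i => j < i).card : ℝ)) * α)
        = α * ∑ t ∈ S \ I, ∏ j ∈ S \ insert t I,
            (f j - ((x : ℝ) + (((insert t I).filter fun i => j < i).card : ℝ)) * α) := by
      intro I hI
      have hIS : I ⊆ S := (Finset.mem_powersetCard.mp hI).1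
      rw [kfd_tel]
      rw [Finset.mul_sum]
      refine Finset.sum_congr rfl fun t ht => ?_
      have htS : t ∈ S := (Finset.mem_sdiff.mp ht).1
      have htI : t ∉ I := (Finset.mem_sdiff.mp ht).2
      have herase : S \ insert t I = (S \ I).erase t := by
        ext b
        simp only [Finset.mem_sdiff, Finset.mem_erase, Finset.mem_insert]
        tauto
      rw [herase, ← kfd_prod_erase_split]
      have h1 : ∏ j ∈ (S \ I).filter (· < t),
          (f j - ((x : ℝ) + (((insert t I).filter fun i => j < i).card : ℝ)) * α)
          = ∏ j ∈ (S \ I).filter (· < t),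
          (f j - (((x : ℕ) + 1 : ℕ) + ((I.filter fun i => j < i).card : ℝ)) * α) := by
        refine Finset.prod_congr rfl fun j hj => ?_
        have hjt : j < t := (Finset.mem_filter.mp hj).2
        rw [Finset.filter_insert]
        rw [if_pos hjt, Finset.card_insert_of_notMem (fun hc => htI (Finset.mem_filter.mp hc).1)]
        push_cast
        ring
      have h2 : ∏ j ∈ (S \ I).filter (t < ·),
          (f j - ((x : ℝ) + (((insert t I).filter fun i => j < i).card : ℝ)) * α)
          = ∏ j ∈ (S \ I).filter (t < ·),
          (f j - ((x : ℝ) + ((I.filter fun i => j < i).card : ℝ)) * α) := by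
        refine Finset.prod_congr rfl fun j hj => ?_
        have hjt : t < j := (Finset.mem_filter.mp hj).2
        rw [Finset.filter_insert, if_neg (by omega)]
      rw [h1, h2]
      have hdiff : (f t - ((x : ℝ) + ((I.filter fun i => t < i).card : ℝ)) * α)
          - (f t - (((x : ℕ) + 1 : ℕ) + ((I.filter fun i => t < i).card : ℝ)) * α) = α := by
        push_cast
        ring
      rw [hdiff]
      ring
    rw [← mul_sub, ← Finset.sum_sub_distrib]
    symm
    calc α ^ k * (k.factorial : ℝ) *
          ∑ I ∈ S.powersetCard k,
            (∏ j ∈ S \ I, (f j - ((x : ℝ) + ((I.filter fun i => j < i).card : ℝ)) * α)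
              - ∏ j ∈ S \ I, (f j - (((x : ℕ) + 1 : ℕ) + ((I.filter fun i => j < i).card : ℝ)) * α))
        = α ^ k * (k.factorial : ℝ) *
          ∑ I ∈ S.powersetCard k, α * ∑ t ∈ S \ I, ∏ j ∈ S \ insert t I,
            (f j - ((x : ℝ) + (((insert t I).filter fun i => j < i).card : ℝ)) * α) := by
          rw [Finset.sum_congr rfl key]
      _ = α ^ k * (k.factorial : ℝ) * α *
          ∑ I ∈ S.powersetCard k, ∑ t ∈ S \ I, ∏ j ∈ S \ insert t I,
            (f j - ((x : ℝ) + (((insert t I).filter fun i => j < i).card : ℝ)) * α) := by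
          rw [← Finset.mul_sum]
          ring
      _ = α ^ k * (k.factorial : ℝ) * α * (((k : ℝ) + 1) *
          ∑ J ∈ S.powersetCard (k + 1), ∏ j ∈ S \ J,
            (f j - ((x : ℝ) + ((J.filter fun i => j < i).card : ℝ)) * α)) := by
          rw [kfd_double_count S k (fun J => ∏ j ∈ S \ J,
            (f j - ((x : ℝ) + ((J.filter fun i => j < i).card : ℝ)) * α))]
      _ = α ^ (k + 1) * ((k + 1).factorial : ℝ) *
          ∑ I ∈ S.powersetCard (k + 1), ∏ j ∈ S \ I,
            (f j - ((x : ℝ) + ((I.filter fun i => j < i).card : ℝ)) * α) := by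
          rw [Nat.factorial_succ]
          push_cast
          ring

end KthFiniteDifferenceAux

/-- `α^k · k! · Σ_{|I| = k} Π_{j ∉ I} (h_j − α·#{i ∈ I : i > j})
= Σ_{j=0}^{k} (−1)^j C(k,j) Π_{i=1}^{m} (h_i − jα)`. -/
theorem kth_finite_difference (L : List ℕ) (hL : IsPartition L) (α : ℝ)
    (k : ℕ) (hk : k ≤ L.headI) :
    α ^ k * (k.factorial : ℝ) *
        ∑ I ∈ Finset.powersetCard k (Finset.Icc 1 L.headI),
          ∏ j ∈ Finset.Icc 1 L.headI \ I,
            (hlow L α j - α * (((I.filter fun i => j < i)).card : ℝ)) =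
      ∑ j ∈ Finset.range (k + 1),
        (-1 : ℝ) ^ j * (Nat.choose k j : ℝ) *
          ∏ i ∈ Finset.Icc 1 L.headI, (hlow L α i - (j : ℝ) * α) := by
  have h := kfd_main_lemma (fun j => hlow L α j) α (Finset.Icc 1 L.headI) k 0
  rw [fwdDiff_iter_eq_sum_shift] at h
  have hL1 : α ^ k * (k.factorial : ℝ) *
        ∑ I ∈ Finset.powersetCard k (Finset.Icc 1 L.headI),
          ∏ j ∈ Finset.Icc 1 L.headI \ I,
            (hlow L α j - α * (((I.filter fun i => j < i)).card : ℝ))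
      = α ^ k * (k.factorial : ℝ) *
        ∑ I ∈ (Finset.Icc 1 L.headI).powersetCard k, ∏ j ∈ Finset.Icc 1 L.headI \ I,
          (hlow L α j - (((0 : ℕ) : ℝ) + ((I.filter fun i => j < i).card : ℝ)) * α) := by
    refine congrArg _ (Finset.sum_congr rfl fun I _ => Finset.prod_congr rfl fun j _ => ?_)
    push_cast
    ring
  rw [hL1, h, Finset.mul_sum]
  refine Finset.sum_congr rfl fun j hj => ?_
  have hjk : j ≤ k := by simp only [Finset.mem_range] at hj; omega
  obtain ⟨d, rfl⟩ : ∃ d, k = j + d := ⟨k - j, by omega⟩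
  have hd : j + d - j = d := by omega
  rw [hd, zsmul_eq_mul]
  have hone : ((-1 : ℝ)) ^ (j + d) * ((-1 : ℝ)) ^ d = (-1 : ℝ) ^ j := by
    rw [pow_add, mul_assoc, ← pow_add, ← two_mul, pow_mul]
    norm_num
  push_cast
  simp only [smul_eq_mul, mul_one, zero_add]
  rw [← hone]
  ring
end

section
/- (Falling-factorial expansion of the shifted principal lower hook product.) For an integer partition λ let λ̂ denote the partition (λ₁−1, λ₂−1, …) with zero parts removed, and let ℓ(λ) = λ′_1 be the number of parts of λ. Define coefficients c^λ_k(α) for k ∈ ℤ by: c^∅_0 := 1 and c^∅_k := 0 for k ≠ 0, and recursively c^λ_k := (α(λ₁ − 1 − k) + ℓ(λ)) · c^{λ̂}_k − c^{λ̂}_{k−1}. Then for every real α and every real x, writing h_i := α(λ₁ − i) + λ′_i: Π_{i=1}^{λ₁} (h_i − xα) = Σ_{k=0}^{λ₁} c^λ_k(α) · α^k · x(x−1)⋯(x−k+1). -/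
open Finset

def hatP (M : List ℕ) : List ℕ := (M.map fun p => p - 1).filter fun p => decide (0 < p)

lemma conjP_hat (M : List ℕ) (j : ℕ) (hj : 1 ≤ j) :
    conjP (hatP M) j = conjP M (j+1) := by
  unfold conjP hatP
  rw [List.filter_filter, List.filter_map, List.length_map]
  congr 1
  apply List.filter_congr
  intro q _
  show (decide (j ≤ q - 1) && decide (0 < q - 1)) = decide (j + 1 ≤ q)
  rw [Bool.and_comm, ← Bool.decide_and, decide_eq_decide]
  omega

lemma hat_isPartition {M : List ℕ} (h : IsPartition M) : IsPartition (hatP M) := by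
  constructor
  · exact List.Pairwise.filter _
      (List.Pairwise.map _ (fun a b hab => Nat.sub_le_sub_right hab 1) h.1)
  · intro p hp
    have := List.of_mem_filter hp
    simpa using this

lemma hat_headI {M : List ℕ} (h : IsPartition M) : (hatP M).headI = M.headI - 1 := by
  cases M with
  | nil => rfl
  | cons p rest =>
    rcases Nat.lt_or_ge p 2 with hp | hp
    · have hp1 : p = 1 := by
        have := h.2 p (by simp)
        omega
      subst hp1
      have hrest : ∀ q ∈ rest, q = 1 := by
        intro q hq
        have h1 := h.2 q (by simp [hq])
        have h2 : 1 ≥ q := (List.pairwise_cons.mp h.1).1 q hq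
        omega
      have hnil : hatP (1 :: rest) = [] := by
        simp only [hatP, List.filter_eq_nil_iff]
        intro a ha
        simp only [List.mem_map, List.mem_cons] at ha
        obtain ⟨q, hq, rfl⟩ := ha
        have : q = 1 := by rcases hq with rfl | hq; rfl; exact hrest q hq
        subst this; simp
      simp [hnil]
    · have he : hatP (p :: rest) =
          (p-1) :: ((rest.map fun q => q - 1).filter fun q => decide (0 < q)) := by
        simp only [hatP, List.map_cons, List.filter_cons]
        rw [if_pos (by simp; omega)]
      simp [he]

lemma headI_pos {M : List ℕ} (h : IsPartition M) (hne : M ≠ []) : 1 ≤ M.headI := by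
  cases M with
  | nil => exact absurd rfl hne
  | cons p rest => exact h.2 p (by simp)

lemma conjP_one {M : List ℕ} (h : IsPartition M) : conjP M 1 = M.length := by
  unfold conjP
  rw [List.filter_eq_self.mpr]
  intro a ha
  exact decide_eq_true (h.2 a ha)

lemma c_zero (α : ℝ) (c : List ℕ → ℤ → ℝ)
    (hc0 : ∀ k : ℤ, c [] k = if k = 0 then 1 else 0)
    (hcrec : ∀ M : List ℕ, M ≠ [] → ∀ k : ℤ,
      c M k = (α * ((M.headI : ℝ) - 1 - (k : ℝ)) + (M.length : ℝ)) * c (hatP M) k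
              - c (hatP M) (k-1)) :
    ∀ n (M : List ℕ), IsPartition M → M.headI = n → ∀ k : ℤ,
      (k < 0 ∨ (n : ℤ) < k) → c M k = 0 := by
  intro n
  induction n using Nat.strong_induction_on with
  | _ n ih =>
    intro M hM hhead k hk
    rcases eq_or_ne M [] with rfl | hne
    · rw [hc0]
      rw [if_neg]
      simp only [List.headI_nil] at hhead
      omega
    · have h1 : 1 ≤ M.headI := headI_pos hM hne
      rw [hcrec M hne k]
      have hhat := hat_isPartition hM
      have hh : (hatP M).headI = n - 1 := by rw [hat_headI hM, hhead]
      rw [ih (n-1) (by omega) (hatP M) hhat hh k (by omega),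
          ih (n-1) (by omega) (hatP M) hhat hh (k-1) (by omega)]
      ring

lemma prod_Icc1 (f : ℕ → ℝ) (n : ℕ) :
    ∏ i ∈ Finset.Icc 1 n, f i = ∏ i ∈ Finset.range n, f (i+1) := by
  rw [← Finset.Ico_add_one_right_eq_Icc, Finset.prod_Ico_eq_prod_range]
  simp [add_comm]


/-- Falling-factorial expansion of the shifted principal lower hook
product. The coefficients `c^λ_k(α)` are specified by their defining recurrence, where
`λ̂ = (λ₁−1, λ₂−1, …)` with zero parts removed. -/
theorem falling_factorial_expansion (α : ℝ) (c : List ℕ → ℤ → ℝ)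
    (hc0 : ∀ k : ℤ, c [] k = if k = 0 then 1 else 0)
    (hcrec : ∀ M : List ℕ, M ≠ [] → ∀ k : ℤ,
      c M k =
        (α * ((M.headI : ℝ) - 1 - (k : ℝ)) + (M.length : ℝ)) *
            c ((M.map fun p => p - 1).filter fun p => decide (0 < p)) k
          - c ((M.map fun p => p - 1).filter fun p => decide (0 < p)) (k - 1))
    (L : List ℕ) (hL : IsPartition L) (x : ℝ) :
    ∏ i ∈ Finset.Icc 1 L.headI, (hlow L α i - x * α) =
      ∑ k ∈ Finset.range (L.headI + 1),
        c L (k : ℤ) * α ^ k * ∏ t ∈ Finset.range k, (x - (t : ℝ)) := by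

  have hcrec' : ∀ M : List ℕ, M ≠ [] → ∀ k : ℤ,
      c M k = (α * ((M.headI : ℝ) - 1 - (k : ℝ)) + (M.length : ℝ)) * c (hatP M) k
              - c (hatP M) (k-1) := hcrec
  clear hcrec
  have czero := c_zero α c hc0 hcrec'
  suffices H : ∀ n (L : List ℕ), IsPartition L → L.headI = n →
      ∏ i ∈ Finset.Icc 1 L.headI, (hlow L α i - x * α) =
        ∑ k ∈ Finset.range (L.headI + 1),
          c L (k : ℤ) * α ^ k * ∏ t ∈ Finset.range k, (x - (t : ℝ)) by
    exact H L.headI L hL rfl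
  intro n
  induction n using Nat.strong_induction_on with
  | _ n ih =>
    intro L hL hhead
    rcases eq_or_ne L [] with rfl | hne
    · simp [hc0 0]
    · have h1 : 1 ≤ L.headI := headI_pos hL hne
      set m : ℕ := L.headI - 1 with hm
      have hLh : L.headI = m + 1 := by omega
      have hhat := hat_isPartition hL
      have hh : (hatP L).headI = m := by rw [hat_headI hL]
      set F : ℕ → ℝ := fun k => ∏ t ∈ Finset.range k, (x - (t : ℝ)) with hF
      set chat : ℤ → ℝ := c (hatP L) with hchat
      -- induction hypothesis for hatP L
      have IH : ∏ i ∈ Finset.Icc 1 m, (hlow (hatP L) α i - x * α) =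
          ∑ k ∈ Finset.range (m + 1), chat (k : ℤ) * α ^ k * F k := by
        have := ih m (by omega) (hatP L) hhat hh
        rw [hh] at this
        exact this
      -- LHS computation
      have hlow_shift : ∀ i : ℕ, hlow L α (i + 2) = hlow (hatP L) α (i + 1) := by
        intro i
        unfold hlow
        rw [conjP_hat L (i+1) (by omega), hh, hLh]
        push_cast
        ring
      have hlow1 : hlow L α 1 = α * (m : ℝ) + (L.length : ℝ) := by
        unfold hlow
        rw [conjP_one hL, hLh]
        push_cast
        ring
      have hLHS : ∏ i ∈ Finset.Icc 1 L.headI, (hlow L α i - x * α) =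
          (α * (m : ℝ) + (L.length : ℝ) - x * α) *
            ∑ k ∈ Finset.range (m + 1), chat (k : ℤ) * α ^ k * F k := by
        rw [hLh, prod_Icc1, Finset.prod_range_succ' (fun i => hlow L α (i+1) - x * α)]
        rw [← IH, prod_Icc1]
        rw [mul_comm]
        congr 1
        · show hlow L α 1 - x * α = _
          rw [hlow1]
        · apply Finset.prod_congr rfl
          intro i _
          show hlow L α (i + 2) - x * α = hlow (hatP L) α (i + 1) - x * α
          rw [hlow_shift i]
      rw [hLHS, hLh]
      -- RHS computation
      have hA : ∀ k ∈ Finset.range (m + 2),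
          c L (k : ℤ) * α ^ k * F k =
            (α * ((m : ℝ) - (k : ℝ)) + (L.length : ℝ)) * chat (k : ℤ) * α ^ k * F k
              - chat ((k : ℤ) - 1) * α ^ k * F k := by
        intro k _
        rw [hcrec' L hne (k : ℤ), hLh]
        push_cast
        ring
      rw [Finset.sum_congr rfl hA, Finset.sum_sub_distrib]
      have hS1 : ∑ k ∈ Finset.range (m + 2),
            (α * ((m : ℝ) - (k : ℝ)) + (L.length : ℝ)) * chat (k : ℤ) * α ^ k * F k
          = ∑ k ∈ Finset.range (m + 1),
            (α * ((m : ℝ) - (k : ℝ)) + (L.length : ℝ)) * chat (k : ℤ) * α ^ k * F k := by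
        rw [Finset.sum_range_succ]
        have hz : chat ((m + 1 : ℕ) : ℤ) = 0 :=
          czero m (hatP L) hhat hh _ (by push_cast; omega)
        rw [hz]
        simp
      have hS2 : ∑ k ∈ Finset.range (m + 2), chat ((k : ℤ) - 1) * α ^ k * F k
          = ∑ k ∈ Finset.range (m + 1), chat (k : ℤ) * α ^ (k + 1) * F (k + 1) := by
        rw [Finset.sum_range_succ' (fun k => chat ((k : ℤ) - 1) * α ^ k * F k)]
        have hz2 : chat (((0 : ℕ) : ℤ) - 1) = 0 :=
          czero m (hatP L) hhat hh _ (by omega)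
        rw [hz2]
        simp only [zero_mul, mul_zero, add_zero]
        apply Finset.sum_congr rfl
        intro k _
        rw [show ((k + 1 : ℕ) : ℤ) - 1 = (k : ℤ) by push_cast; ring]
      rw [hS1, hS2, Finset.mul_sum, ← Finset.sum_sub_distrib]
      apply Finset.sum_congr rfl
      intro k _
      have : F (k + 1) = F k * (x - (k : ℝ)) := Finset.prod_range_succ _ _
      rw [this]
      ring
end
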